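/- arXiv:2402.19234 — 8 statements merged into one kernel-verified Lean document; each statement's English description precedes it below -/
import Mathlib

section
/- For every integer a ≥ 2, the broadcast independence number of the oriented circulant graph C⃗(2a;1,a) equals a, and moreover equals the diameter of C⃗(2a;1,a). -/
/-- Arc relation of the oriented circulant graph C⃗(n;1,a): arcs u → u+1 and u → u+a (mod n). -/
def circArc (n : ℕ) (a : ℤ) (u v : ZMod n) : Prop :=
  v = u + 1 ∨ v = u + (a : ZMod n)

/-- There is a directed walk of length k from u to v in C⃗(n;1,a). -/
def circSteps (n : ℕ) (a : ℤ) (u v : ZMod n) (k : ℕ) : Prop :=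
  ∃ g : ℕ → ZMod n, g 0 = u ∧ g k = v ∧ ∀ i < k, circArc n a (g i) (g (i + 1))

/-- Directed distance: length of a shortest directed path from u to v. -/
noncomputable def circDist (n : ℕ) (a : ℤ) (u v : ZMod n) : ℕ :=
  sInf {k | circSteps n a u v k}

/-- Eccentricity of a vertex: maximum distance from it to any vertex. -/
noncomputable def circEcc (n : ℕ) (a : ℤ) (u : ZMod n) : ℕ :=
  sSup {d | ∃ v, d = circDist n a u v}

/-- Diameter: maximum eccentricity. -/
noncomputable def circDiam (n : ℕ) (a : ℤ) : ℕ :=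
  sSup {d | ∃ u, d = circEcc n a u}

/-- f is an independent broadcast on C⃗(n;1,a). -/
def IsIndepBroadcast (n : ℕ) (a : ℤ) (f : ZMod n → ℕ) : Prop :=
  (∀ v, f v ≤ circEcc n a v) ∧
  ∀ u v : ZMod n, u ≠ v → 0 < f u → 0 < f v → f u < circDist n a u v

/-- Cost of a broadcast: sum of its values over all vertices. -/
def circCost (n : ℕ) (f : ZMod n → ℕ) : ℕ :=
  ∑ i ∈ Finset.range n, f (i : ZMod n)

/-- The broadcast independence number of C⃗(n;1,a). -/
noncomputable def betaB (n : ℕ) (a : ℤ) : ℕ :=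
  sSup {c | ∃ f : ZMod n → ℕ, IsIndepBroadcast n a f ∧ c = circCost n f}

/-! ### Auxiliary lemmas -/

lemma circSteps_construct (n : ℕ) (a : ℤ) (u : ZMod n) (s t : ℕ) :
    circSteps n a u (u + (s : ZMod n) + (t : ZMod n) * ((a : ℤ) : ZMod n)) (s + t) := by
  refine ⟨fun i => u + ((min i s : ℕ) : ZMod n) + (((i - s : ℕ)) : ZMod n) * ((a : ℤ) : ZMod n),
    ?_, ?_, ?_⟩
  · simp
  · have h1 : min (s + t) s = s := min_eq_right (Nat.le_add_right s t)
    have h2 : s + t - s = t := by omega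
    simp only [h1, h2]
  · intro i hi
    by_cases h : i < s
    · left
      have h1 : min i s = i := min_eq_left h.le
      have h2 : min (i + 1) s = i + 1 := min_eq_left h
      have h3 : i - s = 0 := by omega
      have h4 : i + 1 - s = 0 := by omega
      simp only [h1, h2, h3, h4]
      push_cast
      ring
    · right
      have h1 : min i s = s := min_eq_right (by omega)
      have h2 : min (i + 1) s = s := min_eq_right (by omega)
      have h3 : i + 1 - s = (i - s) + 1 := by omega
      simp only [h1, h2, h3]
      push_cast
      ring

lemma circDist_le_of_eq (n : ℕ) (a : ℤ) (u v : ZMod n) (s t : ℕ)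
    (h : v = u + (s : ZMod n) + (t : ZMod n) * ((a : ℤ) : ZMod n)) :
    circDist n a u v ≤ s + t := by
  apply Nat.sInf_le
  rw [h]
  exact circSteps_construct n a u s t

lemma circSteps_decompose (n : ℕ) (a : ℤ) (u : ZMod n) :
    ∀ (k : ℕ) (v : ZMod n), circSteps n a u v k →
      ∃ s t : ℕ, s + t = k ∧ v = u + (s : ZMod n) + (t : ZMod n) * ((a : ℤ) : ZMod n) := by
  intro k
  induction k with
  | zero =>
    rintro v ⟨g, h0, hk, _⟩
    exact ⟨0, 0, rfl, by simp [← hk, h0]⟩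
  | succ k ih =>
    rintro v ⟨g, h0, hk, harc⟩
    obtain ⟨s, t, hst, hv⟩ := ih (g k) ⟨g, h0, rfl, fun i hi => harc i (by omega)⟩
    rcases harc k (by omega) with h | h
    · refine ⟨s + 1, t, by omega, ?_⟩
      rw [← hk, h, hv]; push_cast; ring
    · refine ⟨s, t + 1, by omega, ?_⟩
      rw [← hk, h, hv]; push_cast; ring

section Main

variable (a : ℕ)

/-- The distance bound via the residue mod `a`. -/
lemma circDist_le_mod (ha : 2 ≤ a) (u v : ZMod (2 * a)) (huv : u ≠ v) :
    circDist (2 * a) (a : ℤ) u v ≤ (v - u).val % a + 1 := by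
  haveI : NeZero (2 * a) := ⟨by omega⟩
  obtain ⟨d, hd⟩ : ∃ d, (v - u).val = d := ⟨_, rfl⟩
  rw [hd]
  have hdlt : d < 2 * a := hd ▸ ZMod.val_lt _
  have hdpos : 0 < d := by
    rcases Nat.eq_zero_or_pos d with h | h
    · rw [h] at hd
      exact absurd (sub_eq_zero.mp ((ZMod.val_eq_zero (v - u)).mp hd)).symm huv
    · exact h
  have hvu : v = u + (d : ZMod (2 * a)) := by
    have : ((d : ℕ) : ZMod (2 * a)) = v - u := by
      rw [← hd, ZMod.natCast_val, ZMod.cast_id]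
    rw [this]; ring
  rcases lt_trichotomy d a with hcase | hcase | hcase
  · -- d < a : walk of d ones
    have h1 : circDist (2 * a) (a : ℤ) u v ≤ d + 0 := by
      apply circDist_le_of_eq
      rw [hvu]; push_cast; ring
    have : d % a = d := Nat.mod_eq_of_lt hcase
    omega
  · -- d = a : single a-step
    have h1 : circDist (2 * a) (a : ℤ) u v ≤ 0 + 1 := by
      apply circDist_le_of_eq
      rw [hvu, hcase]; push_cast; ring
    have : d % a = 0 := by rw [hcase, Nat.mod_self]
    omega
  · -- d > a : one a-step then d - a ones
    have h1 : circDist (2 * a) (a : ℤ) u v ≤ (d - a) + 1 := by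
      apply circDist_le_of_eq
      rw [hvu]
      have : ((d : ℕ) : ZMod (2 * a)) = ((d - a : ℕ) : ZMod (2 * a)) + ((a : ℕ) : ZMod (2 * a)) := by
        rw [← Nat.cast_add]
        congr 1
        omega
      rw [this]; push_cast; ring
    have : d % a = d - a := by
      rw [Nat.mod_eq_sub_mod (le_of_lt hcase), Nat.mod_eq_of_lt (by omega)]
    omega

lemma circDist_le_a (ha : 2 ≤ a) (u v : ZMod (2 * a)) :
    circDist (2 * a) (a : ℤ) u v ≤ a := by
  by_cases h : u = v
  · subst h
    have := circDist_le_of_eq (2 * a) (a : ℤ) u u 0 0 (by push_cast; ring)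
    omega
  · have h1 := circDist_le_mod a ha u v h
    have h2 : (v - u).val % a < a := Nat.mod_lt _ (by omega)
    omega

lemma circDist_pred_ge (ha : 2 ≤ a) (u : ZMod (2 * a)) :
    a ≤ circDist (2 * a) (a : ℤ) u (u - 1) := by
  haveI : NeZero (2 * a) := ⟨by omega⟩
  have hmem : (a - 1) + 1 ∈ {k | circSteps (2 * a) (a : ℤ) u (u - 1) k} := by
    have hw := circSteps_construct (2 * a) (a : ℤ) u (a - 1) 1
    have heq : u + ((a - 1 : ℕ) : ZMod (2 * a)) + ((1 : ℕ) : ZMod (2 * a)) * ((a : ℤ) : ZMod (2 * a))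
        = u - 1 := by
      have h2 : (((a - 1) + a : ℕ) : ZMod (2 * a)) = (((2 * a - 1 : ℕ)) : ZMod (2 * a)) := by
        congr 1; omega
      have h3 : (((2 * a - 1 : ℕ)) : ZMod (2 * a)) = -1 := by
        have h4 : (2 * a - 1) + 1 = 2 * a := by omega
        have h5 : (((2 * a - 1 : ℕ) : ZMod (2 * a)) + ((1 : ℕ) : ZMod (2 * a)))
            = ((2 * a : ℕ) : ZMod (2 * a)) := by rw [← Nat.cast_add, h4]
        rw [ZMod.natCast_self] at h5
        push_cast at h5
        linear_combination h5
      push_cast at h2 h3 ⊢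
      linear_combination h2 + h3
    rw [heq] at hw
    exact hw
  apply le_csInf ⟨_, hmem⟩
  rintro k hk
  obtain ⟨s, t, hst, hv⟩ := circSteps_decompose (2 * a) (a : ℤ) u k (u - 1) hk
  by_contra hlt
  push_neg at hlt
  have hcast : ((s + t * a : ℕ) : ZMod (2 * a)) = ((2 * a - 1 : ℕ) : ZMod (2 * a)) := by
    have h3 : (((2 * a - 1 : ℕ)) : ZMod (2 * a)) = -1 := by
      have h4 : (2 * a - 1) + 1 = 2 * a := by omega
      have h5 : (((2 * a - 1 : ℕ) : ZMod (2 * a)) + ((1 : ℕ) : ZMod (2 * a)))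
          = ((2 * a : ℕ) : ZMod (2 * a)) := by rw [← Nat.cast_add, h4]
      rw [ZMod.natCast_self] at h5
      push_cast at h5
      linear_combination h5
    rw [h3]
    have := hv
    push_cast at this ⊢
    linear_combination this.symm
  have hmod : (s + t * a) % (2 * a) = (2 * a - 1) % (2 * a) :=
    (ZMod.natCast_eq_natCast_iff _ _ _).mp hcast
  have hmoda : (s + t * a) % a = (2 * a - 1) % a :=
    Nat.ModEq.of_dvd (dvd_mul_left a 2) hmod
  have h6 : (s + t * a) % a = s % a := Nat.add_mul_mod_self_right s t a
  have h7 : (2 * a - 1) % a = a - 1 := by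
    have : 2 * a - 1 = a + (a - 1) := by omega
    rw [this, Nat.add_mod_left, Nat.mod_eq_of_lt (by omega)]
  have hs : s % a = s := Nat.mod_eq_of_lt (by omega)
  have hseq : s = a - 1 := by omega
  have ht : t = 0 := by omega
  rw [hseq, ht] at hmod
  simp only [Nat.zero_mul, Nat.add_zero] at hmod
  rw [Nat.mod_eq_of_lt (by omega), Nat.mod_eq_of_lt (by omega)] at hmod
  omega

lemma circEcc_eq (ha : 2 ≤ a) (u : ZMod (2 * a)) : circEcc (2 * a) (a : ℤ) u = a := by
  apply le_antisymm
  · refine csSup_le ⟨circDist (2 * a) (a : ℤ) u u, u, rfl⟩ ?_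
    rintro d ⟨v, rfl⟩
    exact circDist_le_a a ha u v
  · refine le_csSup ⟨a, ?_⟩ ?_
    · rintro d ⟨v, rfl⟩
      exact circDist_le_a a ha u v
    · exact ⟨u - 1, (le_antisymm (circDist_le_a a ha u _) (circDist_pred_ge a ha u)).symm⟩

lemma circDiam_eq (ha : 2 ≤ a) : circDiam (2 * a) (a : ℤ) = a := by
  apply le_antisymm
  · refine csSup_le ⟨circEcc (2 * a) (a : ℤ) 0, (0 : ZMod (2 * a)), rfl⟩ ?_
    rintro d ⟨u, rfl⟩
    exact (circEcc_eq a ha u).le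
  · refine le_csSup ⟨a, ?_⟩ ⟨(0 : ZMod (2 * a)), (circEcc_eq a ha 0).symm⟩
    rintro d ⟨u, rfl⟩
    exact (circEcc_eq a ha u).le

lemma residue_dist (ha : 2 ≤ a) (u v : ZMod (2 * a)) (huv : u ≠ v) (j : ℕ) (hj : j < a)
    (h : ((v.val : ZMod a)) = ((u.val : ZMod a)) + (j : ZMod a)) :
    circDist (2 * a) (a : ℤ) u v ≤ j + 1 := by
  haveI : NeZero (2 * a) := ⟨by omega⟩
  haveI : NeZero a := ⟨by omega⟩
  have hb := circDist_le_mod a ha u v huv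
  suffices hsuf : (v - u).val % a = j by omega
  have hdvd : a ∣ 2 * a := dvd_mul_left a 2
  have hcast : (((v - u).val : ℕ) : ZMod a) = (j : ZMod a) := by
    have e1 : ∀ x : ZMod (2 * a), ((x.val : ℕ) : ZMod a) = ZMod.castHom hdvd (ZMod a) x := by
      intro x
      rw [ZMod.castHom_apply, ZMod.natCast_val]
    rw [e1, map_sub, ← e1, ← e1, h]
    ring
  have := congrArg ZMod.val hcast
  rwa [ZMod.val_natCast, ZMod.val_natCast, Nat.mod_eq_of_lt hj] at this

lemma circCost_eq_sum (n : ℕ) [NeZero n] (f : ZMod n → ℕ) :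
    circCost n f = ∑ v : ZMod n, f v := by
  unfold circCost
  exact Finset.sum_nbij' (fun m : ℕ => (m : ZMod n)) (fun v : ZMod n => v.val)
    (fun m _ => Finset.mem_univ _)
    (fun v _ => Finset.mem_range.mpr (ZMod.val_lt v))
    (fun m hm => by
      show ((m : ZMod n)).val = m
      rw [ZMod.val_natCast, Nat.mod_eq_of_lt (Finset.mem_range.mp hm)])
    (fun v _ => by
      show ((v.val : ℕ) : ZMod n) = v
      rw [ZMod.natCast_val, ZMod.cast_id])
    (fun m _ => rfl)

lemma cost_le (ha : 2 ≤ a) (f : ZMod (2 * a) → ℕ)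
    (hf : IsIndepBroadcast (2 * a) (a : ℤ) f) : circCost (2 * a) f ≤ a := by
  haveI : NeZero (2 * a) := ⟨by omega⟩
  haveI : NeZero a := ⟨by omega⟩
  have hfle : ∀ v, f v ≤ a := fun v => (hf.1 v).trans_eq (circEcc_eq a ha v)
  rw [circCost_eq_sum]
  set S : Finset (ZMod (2 * a)) := Finset.univ.filter (fun v => f v ≠ 0) with hS
  have hsum : ∑ v : ZMod (2 * a), f v = ∑ v ∈ S, f v :=
    (Finset.sum_filter_ne_zero Finset.univ).symm
  set I : ZMod (2 * a) → Finset (ZMod a) :=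
    fun u => (Finset.range (f u)).image (fun i : ℕ => ((u.val : ZMod a)) + (i : ZMod a)) with hI
  have hcard : ∀ u, (I u).card = f u := by
    intro u
    rw [hI]
    rw [Finset.card_image_of_injOn, Finset.card_range]
    intro i hi j hj hij
    simp only [Finset.coe_range, Set.mem_Iio] at hi hj
    have : (i : ZMod a) = (j : ZMod a) := by
      have := hij
      simpa using this
    have hv := congrArg ZMod.val this
    rw [ZMod.val_natCast, ZMod.val_natCast,
      Nat.mod_eq_of_lt (lt_of_lt_of_le hi (hfle u)),
      Nat.mod_eq_of_lt (lt_of_lt_of_le hj (hfle u))] at hv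
    exact hv
  have hdisj : ∀ u ∈ S, ∀ v ∈ S, u ≠ v → Disjoint (I u) (I v) := by
    intro u hu v hv huv
    rw [hS, Finset.mem_filter] at hu hv
    rw [Finset.disjoint_left]
    intro x hxu hxv
    rw [hI, Finset.mem_image] at hxu hxv
    obtain ⟨i, hi, hix⟩ := hxu
    obtain ⟨j, hj, hjx⟩ := hxv
    rw [Finset.mem_range] at hi hj
    have hx : ((u.val : ZMod a)) + (i : ZMod a) = ((v.val : ZMod a)) + (j : ZMod a) := by
      rw [hix, hjx]
    rcases le_or_gt j i with hle | hlt
    · -- v.val = u.val + (i - j)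
      have hres : ((v.val : ZMod a)) = ((u.val : ZMod a)) + ((i - j : ℕ) : ZMod a) := by
        have hij : ((i : ℕ) : ZMod a) = ((i - j : ℕ) : ZMod a) + ((j : ℕ) : ZMod a) := by
          rw [← Nat.cast_add]
          congr 1
          omega
        rw [hij] at hx
        linear_combination -hx
      have hu' := hfle u
      have hdist := residue_dist a ha u v huv (i - j) (by omega) hres
      have := hf.2 u v huv (by omega) (by omega)
      omega
    · -- u.val = v.val + (j - i)
      have hres : ((u.val : ZMod a)) = ((v.val : ZMod a)) + ((j - i : ℕ) : ZMod a) := by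
        have hij : ((j : ℕ) : ZMod a) = ((j - i : ℕ) : ZMod a) + ((i : ℕ) : ZMod a) := by
          rw [← Nat.cast_add]
          congr 1
          omega
        rw [hij] at hx
        linear_combination hx
      have hv' := hfle v
      have hdist := residue_dist a ha v u huv.symm (j - i) (by omega) hres
      have := hf.2 v u huv.symm (by omega) (by omega)
      omega
  calc ∑ v : ZMod (2 * a), f v = ∑ v ∈ S, f v := hsum
    _ = ∑ v ∈ S, (I v).card := by
        apply Finset.sum_congr rfl
        intro v _
        exact (hcard v).symm
    _ = (S.biUnion I).card := (Finset.card_biUnion hdisj).symm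
    _ ≤ Fintype.card (ZMod a) := Finset.card_le_univ _
    _ = a := ZMod.card a

lemma exists_broadcast (ha : 2 ≤ a) :
    ∃ f : ZMod (2 * a) → ℕ, IsIndepBroadcast (2 * a) (a : ℤ) f ∧ circCost (2 * a) f = a := by
  haveI : NeZero (2 * a) := ⟨by omega⟩
  refine ⟨fun v => if v = 0 then a else 0, ⟨?_, ?_⟩, ?_⟩
  · intro v
    rw [circEcc_eq a ha v]
    show (if v = 0 then a else 0) ≤ a
    split <;> omega
  · intro u v huv hu hv
    exfalso
    apply huv
    have hu0 : u = 0 := by by_contra h; simp [h] at hu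
    have hv0 : v = 0 := by by_contra h; simp [h] at hv
    rw [hu0, hv0]
  · unfold circCost
    have hrw : ∀ i ∈ Finset.range (2 * a),
        (if ((i : ℕ) : ZMod (2 * a)) = 0 then a else 0) = if i = 0 then a else 0 := by
      intro i hi
      rw [Finset.mem_range] at hi
      congr 1
      simp only [eq_iff_iff]
      constructor
      · intro h
        exact Nat.eq_zero_of_dvd_of_lt ((ZMod.natCast_eq_zero_iff i (2 * a)).mp h) hi
      · rintro rfl
        simp
    rw [Finset.sum_congr rfl hrw, Finset.sum_ite_eq' (Finset.range (2 * a)) 0 (fun _ => a)]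
    simp only [Finset.mem_range]
    rw [if_pos (by omega)]

end Main

theorem stmt1 (a : ℕ) (ha : 2 ≤ a) :
    betaB (2 * a) (a : ℤ) = a ∧ betaB (2 * a) (a : ℤ) = circDiam (2 * a) (a : ℤ) := by
  obtain ⟨f, hf, hcost⟩ := exists_broadcast a ha
  have hmem : a ∈ {c | ∃ f : ZMod (2 * a) → ℕ,
      IsIndepBroadcast (2 * a) (a : ℤ) f ∧ c = circCost (2 * a) f} := ⟨f, hf, hcost.symm⟩
  have hub : ∀ c ∈ {c | ∃ f : ZMod (2 * a) → ℕ,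
      IsIndepBroadcast (2 * a) (a : ℤ) f ∧ c = circCost (2 * a) f}, c ≤ a := by
    rintro c ⟨g, hg, rfl⟩
    exact cost_le a ha g hg
  have hbeta : betaB (2 * a) (a : ℤ) = a :=
    le_antisymm (csSup_le ⟨a, hmem⟩ hub) (le_csSup ⟨a, hub⟩ hmem)
  exact ⟨hbeta, by rw [hbeta, circDiam_eq a ha]⟩
end

section
/- For every independent broadcast f on the oriented circulant graph C⃗(2a;1,a) with a ≥ 2, the cost Σ_{v} f(v) is at most a. -/
lemma steps_ones (n : ℕ) (b : ℤ) (u : ZMod n) (t : ℕ) :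
    circSteps n b u (u + (t : ZMod n)) t := by
  refine ⟨fun i => u + (i : ZMod n), by simp, rfl, fun i hi => Or.inl ?_⟩
  push_cast
  ring

lemma steps_chord (n : ℕ) (b : ℤ) (u : ZMod n) (t : ℕ) :
    circSteps n b u (u + (b : ZMod n) + (t : ZMod n)) (t + 1) := by
  refine ⟨fun i => if i = 0 then u else u + (b : ZMod n) + ((i - 1 : ℕ) : ZMod n),
    by simp, by simp, fun i hi => ?_⟩
  rcases Nat.eq_zero_or_pos i with h0 | h0
  · subst h0; exact Or.inr (by simp)
  · refine Or.inl ?_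
    have h1 : i ≠ 0 := h0.ne'
    have h2 : i + 1 ≠ 0 := by omega
    simp only [h1, h2, if_neg, if_false]
    have : (i + 1 - 1 : ℕ) = (i - 1) + 1 := by omega
    rw [this]
    push_cast
    ring

lemma dist_le_val (n : ℕ) [NeZero n] (b : ℤ) (u v : ZMod n) :
    circDist n b u v ≤ (v - u).val := by
  apply Nat.sInf_le
  have h : u + (((v - u).val : ℕ) : ZMod n) = v := by
    simp [ZMod.natCast_val, ZMod.cast_id]
  simpa [Set.mem_setOf_eq, h] using steps_ones n b u (v - u).val

lemma dist_le_chord (a : ℕ) [NeZero (2*a)] (u v : ZMod (2*a))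
    (h : a ≤ (v - u).val) :
    circDist (2*a) (a : ℤ) u v ≤ (v - u).val - a + 1 := by
  apply Nat.sInf_le
  have h2 : u + ((a : ℤ) : ZMod (2*a)) + (((v - u).val - a : ℕ) : ZMod (2*a)) = v := by
    push_cast
    have : ((((v-u).val - a : ℕ)) : ZMod (2*a)) = (((v-u).val : ℕ) : ZMod (2*a)) - (a : ZMod (2*a)) := by
      have := Nat.sub_add_cancel h
      calc ((((v-u).val - a : ℕ)) : ZMod (2*a))
          = (((((v-u).val - a) + a : ℕ)) : ZMod (2*a)) - (a:ZMod (2*a)) := by push_cast; ring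
        _ = _ := by rw [this]
    rw [this]
    simp only [ZMod.natCast_val, ZMod.cast_id]
    ring
  have := steps_chord (2*a) (a:ℤ) u ((v - u).val - a)
  rw [h2] at this
  exact this

lemma ecc_le (a : ℕ) (ha : 1 ≤ a) [NeZero (2*a)] (u : ZMod (2*a)) :
    circEcc (2*a) (a : ℤ) u ≤ a := by
  refine csSup_le ⟨circDist (2*a) (a:ℤ) u u, u, rfl⟩ ?_
  rintro d ⟨v, rfl⟩
  rcases le_or_gt ((v - u).val) a with h | h
  · exact (dist_le_val _ _ u v).trans h
  · have h2 := dist_le_chord a u v h.le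
    have h3 : (v - u).val < 2 * a := ZMod.val_lt _
    omega

theorem stmt2 (a : ℕ) (ha : 2 ≤ a) (f : ZMod (2 * a) → ℕ)
    (hf : IsIndepBroadcast (2 * a) (a : ℤ) f) :
    circCost (2 * a) f ≤ a := by
  haveI : NeZero (2 * a) := ⟨by omega⟩
  -- rewrite cost as a sum over univ
  have hcost : circCost (2 * a) f = ∑ v : ZMod (2 * a), f v := by
    rw [circCost]
    refine Finset.sum_nbij' (fun i => (i : ZMod (2*a))) (fun v => v.val) ?_ ?_ ?_ ?_ ?_
    · intro i _; exact Finset.mem_univ _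
    · intro v _; exact Finset.mem_range.mpr (ZMod.val_lt v)
    · intro i hi; exact ZMod.val_cast_of_lt (Finset.mem_range.mp hi)
    · intro v _; simp [ZMod.natCast_val, ZMod.cast_id]
    · intro i _; rfl
  rw [hcost]
  -- basic pairwise constraints
  have key : ∀ u v : ZMod (2*a), u ≠ v → 0 < f u → 0 < f v →
      f u < (v - u).val ∧ (a ≤ (v - u).val → f u + a ≤ (v - u).val) := by
    intro u v huv hu hv
    have hlt := hf.2 u v huv hu hv
    constructor
    · exact hlt.trans_le (dist_le_val _ _ u v)
    · intro hle
      have := hlt.trans_le (dist_le_chord a u v hle)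
      omega
  have hDD : ∀ u v : ZMod (2*a), u ≠ v →
      1 ≤ (v - u).val ∧ (v - u).val ≤ 2*a - 1 ∧ (v - u).val + (u - v).val = 2*a := by
    intro u v huv
    have h1 : v - u ≠ 0 := sub_ne_zero.mpr (Ne.symm huv)
    have h2 : u - v ≠ 0 := sub_ne_zero.mpr huv
    have h1' : (v - u).val ≠ 0 := fun h => h1 ((ZMod.val_eq_zero _).mp h)
    have h2' : (u - v).val ≠ 0 := fun h => h2 ((ZMod.val_eq_zero _).mp h)
    have h3 : (v - u).val < 2*a := ZMod.val_lt _
    have h4 : (u - v).val < 2*a := ZMod.val_lt _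
    have h5 : (((v - u).val + (u - v).val : ℕ) : ZMod (2*a)) = 0 := by
      push_cast
      simp only [ZMod.natCast_val, ZMod.cast_id]
      ring
    rw [ZMod.natCast_eq_zero_iff] at h5
    obtain ⟨c, hc⟩ := h5
    constructor
    · omega
    constructor
    · omega
    · rcases Nat.lt_or_ge c 2 with h | h
      · interval_cases c <;> omega
      · nlinarith
  by_cases hS : ∃ u v : ZMod (2*a), u ≠ v ∧ 0 < f u ∧ 0 < f v
  · -- support has at least 2 elements
    obtain ⟨u₀, v₀, hne₀, hu₀, hv₀⟩ := hS
    -- every supported vertex has small value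
    have hsmall : ∀ u : ZMod (2*a), 0 < f u → f u + 2 ≤ a := by
      intro u hu
      obtain ⟨w, hw, hwne⟩ : ∃ w, 0 < f w ∧ w ≠ u := by
        by_cases h : u = u₀
        · exact ⟨v₀, hv₀, by rw [h]; exact hne₀.symm⟩
        · exact ⟨u₀, hu₀, fun hh => h hh.symm⟩
      have k1 := key u w (fun h => hwne h.symm) hu hw
      have k2 := key w u hwne hw hu
      have d1 := hDD u w (fun h => hwne h.symm)
      omega
    -- the blocked sets
    set S : Finset (ZMod (2*a)) := Finset.univ.filter (fun v => 0 < f v) with hSdef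
    set B : ZMod (2*a) → Finset ℕ :=
      fun u => Finset.range (f u + 1) ∪ Finset.Ico (a+1) (a + f u) with hBdef
    set A : ZMod (2*a) → Finset (ZMod (2*a)) :=
      fun u => (B u).image (fun s : ℕ => u + (s : ℕ)) with hAdef
    have hBmem : ∀ u, ∀ s ∈ B u, s ≤ f u ∨ (a+1 ≤ s ∧ s < a + f u) := by
      intro u s hs
      rw [hBdef] at hs
      simp only [Finset.mem_union, Finset.mem_range, Finset.mem_Ico] at hs
      omega
    have hcard : ∀ u ∈ S, (A u).card = 2 * f u := by
      intro u hu
      have hu' : 0 < f u := (Finset.mem_filter.mp hu).2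
      have hfu := hsmall u hu'
      have hBb : ∀ s ∈ B u, s < 2*a := by
        intro s hs
        rcases hBmem u s hs with h | h <;> omega
      rw [hAdef]
      rw [Finset.card_image_of_injOn]
      · rw [hBdef, Finset.card_union_of_disjoint]
        · rw [Nat.card_Ico, Finset.card_range]; omega
        · rw [Finset.disjoint_left]
          intro s hs hs'
          simp only [Finset.mem_range] at hs
          simp only [Finset.mem_Ico] at hs'
          omega
      · intro s hs s' hs' hss
        have h1 : (s : ZMod (2*a)) = (s' : ZMod (2*a)) := add_left_cancel hss
        rw [ZMod.natCast_eq_natCast_iff'] at h1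
        have b1 := hBb s hs
        have b2 := hBb s' hs'
        rwa [Nat.mod_eq_of_lt b1, Nat.mod_eq_of_lt b2] at h1
    have hdisj : (S : Set (ZMod (2*a))).PairwiseDisjoint A := by
      intro u hu v hv huv
      simp only [Finset.coe_mem, Finset.mem_coe, hSdef, Finset.mem_filter] at hu hv
      simp only [Function.onFun]
      rw [Finset.disjoint_left]
      intro x hxu hxv
      rw [hAdef] at hxu hxv
      simp only [Finset.mem_image] at hxu hxv
      obtain ⟨s, hs, hxs⟩ := hxu
      obtain ⟨s', hs', hxs'⟩ := hxv
      have heq : u + (s : ZMod (2*a)) = v + (s' : ZMod (2*a)) := by rw [hxs, hxs']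
      -- turn into numeric congruence
      have hDval : (((v - u).val + s' : ℕ) : ZMod (2*a)) = (s : ZMod (2*a)) := by
        push_cast
        simp only [ZMod.natCast_val, ZMod.cast_id]
        linear_combination heq.symm
      rw [ZMod.natCast_eq_natCast_iff'] at hDval
      have k1 := key u v huv hu.2 hv.2
      have k2 := key v u (Ne.symm huv) hv.2 hu.2
      have d1 := hDD u v huv
      have hb1 := hBmem u s hs
      have hb2 := hBmem v s' hs'
      have hf1 := hsmall u hu.2
      have hf2 := hsmall v hv.2
      -- extract an exact equation from the congruence
      have hb1' : s < 2*a := by rcases hb1 with h | h <;> omega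
      have hb2' : s' < 2*a := by rcases hb2 with h | h <;> omega
      have hm1 : (v-u).val + s' = s ∨ (v-u).val + s' = s + 2*a := by
        have hL : (v-u).val + s' < 2 * (2*a) := by
          have := ZMod.val_lt (v - u); omega
        have hq := Nat.div_add_mod ((v-u).val + s') (2*a)
        have hqlt : ((v-u).val + s') / (2*a) < 2 :=
          Nat.div_lt_of_lt_mul (by omega)
        rw [hDval, Nat.mod_eq_of_lt hb1'] at hq
        interval_cases h : ((v-u).val + s') / (2*a) <;> omega
      omega
    -- counting
    have hcount : ∑ u ∈ S, 2 * f u ≤ 2 * a := by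
      have h1 : ∑ u ∈ S, 2 * f u = (S.biUnion A).card := by
        rw [Finset.card_biUnion (fun u hu v hv huv => hdisj (Finset.mem_coe.mpr hu) (Finset.mem_coe.mpr hv) huv)]
        exact (Finset.sum_congr rfl fun u hu => (hcard u hu).symm)
      have h2 : (S.biUnion A).card ≤ Fintype.card (ZMod (2*a)) := Finset.card_le_univ _
      rw [ZMod.card] at h2
      omega
    have hsum : ∑ v : ZMod (2*a), f v = ∑ u ∈ S, f u := by
      rw [hSdef]
      rw [Finset.sum_filter_of_ne]
      intro v _ hv
      omega
    rw [hsum]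
    have : 2 * ∑ u ∈ S, f u = ∑ u ∈ S, 2 * f u := by rw [Finset.mul_sum]
    omega
  · -- support has at most one element
    by_cases h0 : ∃ u : ZMod (2*a), 0 < f u
    · obtain ⟨u, hu⟩ := h0
      have : ∑ v : ZMod (2*a), f v = f u := by
        apply Finset.sum_eq_single u
        · intro v _ hv
          by_contra h
          exact hS ⟨v, u, hv, Nat.pos_of_ne_zero h, hu⟩
        · intro h; exact absurd (Finset.mem_univ u) h
      rw [this]
      exact (hf.1 u).trans (ecc_le a (by omega) u)
    · push_neg at h0
      simp only [Nat.le_zero] at h0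
      have : ∑ v : ZMod (2*a), f v = 0 := Finset.sum_eq_zero fun v _ => h0 v
      omega
end

section
/- For every integer a ≥ 2, the oriented circulant graphs C⃗(2a-1;1,a) and C⃗(2a-1;1,2) are isomorphic. -/
theorem stmt6 (a : ℕ) (ha : 2 ≤ a) :
    ∃ φ : ZMod (2 * a - 1) ≃ ZMod (2 * a - 1), ∀ u v : ZMod (2 * a - 1),
      circArc (2 * a - 1) (a : ℤ) u v ↔ circArc (2 * a - 1) 2 (φ u) (φ v) := by
  have h1 : (2 : ZMod (2 * a - 1)) * (a : ZMod (2 * a - 1)) = 1 := by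
    have h : ((2 * a : ℕ) : ZMod (2 * a - 1)) = 1 := by
      have e : 2 * a = (2 * a - 1) + 1 := by omega
      rw [e]; push_cast; simp
    push_cast at h; linear_combination h
  refine ⟨⟨fun x => 2 * x, fun x => (a : ZMod (2 * a - 1)) * x, ?_, ?_⟩, ?_⟩
  · intro x; simp only; linear_combination x * h1
  · intro x; simp only; linear_combination x * h1
  · intro u v
    unfold circArc
    simp only [Equiv.coe_fn_mk]
    push_cast
    constructor
    · rintro (rfl | rfl)
      · right; ring
      · left; linear_combination h1
    · rintro (h | h)
      · right; linear_combination (a : ZMod (2 * a - 1)) * h + (u - v) * h1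
      · left; linear_combination (a : ZMod (2 * a - 1)) * h + (u - v + 1) * h1
end

section
/- If n = qa + r with a ≥ 4, q ≥ 2 and 0 ≤ r ≤ a-1, then the diameter of the oriented circulant graph C⃗(n;1,a) is at most q + a - 2. -/
theorem stmt8 (n a q r : ℕ) (hn : n = q * a + r) (ha : 4 ≤ a) (hq : 2 ≤ q)
    (hr : r ≤ a - 1) :
    circDiam n (a : ℤ) ≤ q + a - 2 := by
  have ha0 : 0 < a := by omega
  have h8 : 8 ≤ q * a := by calc (8:ℕ) = 2 * 4 := rfl
                                _ ≤ q * a := Nat.mul_le_mul hq ha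
  have hn0 : 0 < n := by omega
  haveI : NeZero n := ⟨hn0.ne'⟩
  -- key: every distance is at most q + a - 2
  have key : ∀ u v : ZMod n, circDist n (a : ℤ) u v ≤ q + a - 2 := by
    intro u v
    set m : ℕ := (v - u).val with hm_def
    have hm : m < n := ZMod.val_lt _
    have hcast : ((m : ℕ) : ZMod n) = v - u := by
      simp [hm_def, ZMod.natCast_val, ZMod.cast_id]
    set s : ℕ := m / a with hs_def
    set t : ℕ := m % a with ht_def
    have hst : s * a + t = m := by
      rw [hs_def, ht_def, Nat.mul_comm, Nat.div_add_mod]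
    have ht : t < a := Nat.mod_lt _ ha0
    have hs : s ≤ q := by
      by_contra hcon
      push_neg at hcon
      have : (q + 1) * a ≤ s * a := Nat.mul_le_mul_right a hcon
      have h2 : (q + 1) * a = q * a + a := by ring
      omega
    have hbound : s + t ≤ q + a - 2 := by
      rcases eq_or_lt_of_le hs with hsq | hsq
      · -- s = q : then t < r
        have hqa : q * a + t = m := by rw [← hsq]; exact hst
        omega
      · omega
    -- construct a walk of length s + t
    have hsteps : circSteps n (a : ℤ) u v (s + t) := by
      refine ⟨fun i => u + ((min i s * a + (i - s) : ℕ) : ZMod n), by simp, ?_, ?_⟩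
      · have h1 : min (s + t) s = s := min_eq_right (Nat.le_add_right s t)
        have h2 : s + t - s = t := by omega
        show u + ((min (s + t) s * a + (s + t - s) : ℕ) : ZMod n) = v
        rw [h1, h2, hst, hcast]
        ring
      · intro i hi
        rcases lt_or_ge i s with hlt | hle
        · right
          have h1 : min i s = i := min_eq_left hlt.le
          have h2 : min (i + 1) s = i + 1 := min_eq_left hlt
          have h3 : i - s = 0 := Nat.sub_eq_zero_of_le hlt.le
          have h4 : i + 1 - s = 0 := Nat.sub_eq_zero_of_le hlt
          show u + ((min (i + 1) s * a + (i + 1 - s) : ℕ) : ZMod n)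
              = u + ((min i s * a + (i - s) : ℕ) : ZMod n) + ((a : ℤ) : ZMod n)
          rw [h1, h2, h3, h4]
          push_cast
          ring
        · left
          have h1 : min i s = s := min_eq_right hle
          have h2 : min (i + 1) s = s := min_eq_right (le_trans hle (Nat.le_succ i))
          have h3 : i + 1 - s = (i - s) + 1 := by omega
          show u + ((min (i + 1) s * a + (i + 1 - s) : ℕ) : ZMod n)
              = u + ((min i s * a + (i - s) : ℕ) : ZMod n) + 1
          rw [h1, h2, h3]
          push_cast
          ring
    exact le_trans (Nat.sInf_le hsteps) hbound
  have ecc : ∀ u : ZMod n, circEcc n (a : ℤ) u ≤ q + a - 2 := by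
    intro u
    refine csSup_le ⟨circDist n (a : ℤ) u u, u, rfl⟩ ?_
    rintro d ⟨v, rfl⟩
    exact key u v
  refine csSup_le ⟨circEcc n (a : ℤ) 0, 0, rfl⟩ ?_
  rintro d ⟨u, rfl⟩
  exact ecc u
end

section
/- Let n = qa with a ≥ 4 and q ≥ 3, or n = qa + r with q ≥ 2, 1 ≤ r ≤ a-1 and 4 ≤ a ≤ r + q + 1. Then for any two vertices v_i, v_j of the oriented circulant graph C⃗(n;1,a) with 0 ≤ i < j ≤ n-1, the directed distance from v_i to v_j equals ⌊(j-i)/a⌋·(1-a) + (j - i). -/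
set_option maxHeartbeats 1600000 in
lemma circDist_main (n a q r : ℕ) (ha : 4 ≤ a) (hn : n = q * a + r) (hra : r ≤ a - 1)
    (hror : r = 0 ∨ a ≤ r + q + 1) (i j : ℕ) (hij : i < j) (hj : j ≤ n - 1) :
    circDist n (a : ℤ) (i : ZMod n) (j : ZMod n) = (j - i) / a + (j - i) % a := by
  set d := j - i with hd
  set m := d / a with hm
  set s := d % a with hs
  have hms : m * a + s = d := by rw [hm, hs, Nat.mul_comm]; exact Nat.div_add_mod d a
  have hapos : 0 < a := by omega
  have hsa : s < a := Nat.mod_lt _ hapos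
  have hnpos : 2 ≤ n := by omega
  have hdn : d < n := by omega
  have hji : i + d = j := by omega
  -- upper bound: an explicit walk of length m + s
  have hmem : circSteps n (a : ℤ) (i : ZMod n) (j : ZMod n) (m + s) := by
    refine ⟨fun t => ((i + (min t m) * a + (t - min t m) : ℕ) : ZMod n), ?_, ?_, ?_⟩
    · simp
    · beta_reduce
      have h1 : min (m + s) m = m := by omega
      rw [h1]
      have h2 : i + m * a + (m + s - m) = j := by omega
      rw [h2]
    · intro t ht
      beta_reduce
      by_cases htm : t < m
      · right
        have e1 : min t m = t := by omega
        have e2 : min (t + 1) m = t + 1 := by omega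
        rw [e1, e2]
        have e3 : i + (t + 1) * a + (t + 1 - (t + 1)) = (i + t * a + (t - t)) + a := by
          ring_nf; omega
        rw [e3]
        push_cast
        ring
      · left
        have e1 : min t m = m := by omega
        have e2 : min (t + 1) m = m := by omega
        rw [e1, e2]
        have e3 : i + m * a + (t + 1 - m) = (i + m * a + (t - m)) + 1 := by omega
        rw [e3]
        push_cast
        ring
  -- lower bound
  have hlow : ∀ k, circSteps n (a : ℤ) (i : ZMod n) (j : ZMod n) k → m + s ≤ k := by
    rintro k ⟨g, hg0, hgk, hstep⟩
    have key : ∀ k', k' ≤ k → ∃ t, t ≤ k' ∧ g k' = ((i + t * a + (k' - t) : ℕ) : ZMod n) := by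
      intro k' hk'
      induction k' with
      | zero => exact ⟨0, le_refl 0, by simpa using hg0⟩
      | succ k' ih =>
        obtain ⟨t, htle, hteq⟩ := ih (by omega)
        rcases hstep k' (by omega) with h1 | ha'
        · refine ⟨t, by omega, ?_⟩
          rw [h1, hteq]
          have e : i + t * a + (k' + 1 - t) = (i + t * a + (k' - t)) + 1 := by omega
          rw [e]; push_cast; ring
        · refine ⟨t + 1, by omega, ?_⟩
          rw [ha', hteq]
          have e : i + (t + 1) * a + (k' + 1 - (t + 1)) = (i + t * a + (k' - t)) + a := by
            ring_nf; omega
          rw [e]; push_cast; ring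
    obtain ⟨t, htk, hteq⟩ := key k le_rfl
    rw [hgk] at hteq
    have hzm : ((j : ℤ) : ZMod n) = (((i : ℤ) + t * a + (k - t) : ℤ) : ZMod n) := by
      push_cast [Nat.cast_sub htk] at hteq ⊢
      linear_combination hteq
    rw [ZMod.intCast_eq_intCast_iff] at hzm
    obtain ⟨c, hc⟩ := hzm.dvd
    -- key integer equation : k + t*(a-1) = d + c*n
    have hkey : (k : ℤ) + t * a - t = d + c * n := by
      have hdij : (d : ℤ) = (j : ℤ) - i := by
        have := hji; push_cast [← this]; ring
      rw [hdij]
      linarith [hc]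
    have hc0 : 0 ≤ c := by
      by_contra hcneg
      push_neg at hcneg
      have h1 : c ≤ -1 := by omega
      have hn0 : (0:ℤ) < n := by exact_mod_cast (show 0 < n by omega)
      have h2 : c * n ≤ -(n : ℤ) := by nlinarith
      have h3 : (0:ℤ) ≤ (k : ℤ) + t * a - t := by
        have : (t:ℤ) ≤ t * a := by nlinarith [(Nat.cast_nonneg t : (0:ℤ) ≤ t), (show (1:ℤ) ≤ a by exact_mod_cast hapos)]
        linarith [(Nat.cast_nonneg k : (0:ℤ) ≤ k)]
      have h4 : (d : ℤ) < n := by exact_mod_cast hdn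
      linarith
    have hdms : (d : ℤ) = (m : ℤ) * a + s := by exact_mod_cast hms.symm
    have htk' : (t : ℤ) ≤ k := by exact_mod_cast htk
    rcases eq_or_lt_of_le hc0 with hc1 | hc1
    · -- c = 0
      have hceq : (k : ℤ) + t * a - t = d := by rw [hkey, ← hc1]; ring
      have hta : (t : ℤ) * a ≤ d := by linarith
      have htm : t ≤ m := by
        rw [hm]
        rw [Nat.le_div_iff_mul_le hapos]
        exact_mod_cast hta
      have htm' : (t : ℤ) ≤ m := by exact_mod_cast htm
      have hA1 : (1:ℤ) ≤ a := by exact_mod_cast hapos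
      have hprod : (t:ℤ) * (a - 1) ≤ (m:ℤ) * (a - 1) :=
        mul_le_mul_of_nonneg_right htm' (by linarith)
      have : (m : ℤ) + s ≤ k := by linarith [hceq, hdms, hprod]
      exact_mod_cast this
    · -- c ≥ 1
      have hc1' : (1 : ℤ) ≤ c := hc1
      have hta : (t : ℤ) * a ≤ d + c * n := by linarith
      have hA1 : (1:ℤ) ≤ a := by exact_mod_cast hapos
      have hs' : (s : ℤ) ≤ a - 1 := by
        have h : (s : ℤ) < a := by exact_mod_cast hsa
        omega
      have hnint : (n : ℤ) = q * a + r := by exact_mod_cast hn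
      rcases hror with hr0 | hrq
      · -- r = 0, n = q*a
        have hr0' : (r : ℤ) = 0 := by exact_mod_cast hr0
        have hcn : c * (n:ℤ) = c * q * a := by rw [hnint, hr0']; ring
        have ht_bound : (t : ℤ) ≤ m + c * q := by
          by_contra hcon
          push_neg at hcon
          have h5 : (m : ℤ) + c * q + 1 ≤ t := Int.lt_iff_add_one_le.mp hcon
          have h6 : ((m : ℤ) + c * q + 1) * a ≤ t * a :=
            mul_le_mul_of_nonneg_right h5 (by linarith)
          linarith [hta, hdms, hcn, hs']
        have hcq : (0:ℤ) ≤ c * q := mul_nonneg hc0 (Nat.cast_nonneg q)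
        have hprod : (t:ℤ) * (a - 1) ≤ ((m:ℤ) + c * q) * (a - 1) :=
          mul_le_mul_of_nonneg_right ht_bound (by linarith)
        have : (m : ℤ) + s ≤ k := by linarith [hkey, hdms, hcn, hprod, hcq]
        exact_mod_cast this
      · -- r ≥ 1 case: a ≤ r + q + 1
        have hrq' : (a : ℤ) ≤ r + q + 1 := by exact_mod_cast hrq
        have hr' : (r : ℤ) ≤ a - 1 := by
          have h : r + 1 ≤ a := by omega
          have h2 : (r : ℤ) + 1 ≤ a := by exact_mod_cast h
          omega
        have hrpos : (0:ℤ) ≤ r := Nat.cast_nonneg r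
        have hcn : c * (n:ℤ) = c * q * a + c * r := by rw [hnint]; ring
        have hcr : c * (r:ℤ) ≤ c * (a - 1) := mul_le_mul_of_nonneg_left hr' hc0
        have ht_bound : (t : ℤ) ≤ m + c * q + c := by
          by_contra hcon
          push_neg at hcon
          have h5 : (m : ℤ) + c * q + c + 1 ≤ t := Int.lt_iff_add_one_le.mp hcon
          have h6 : ((m : ℤ) + c * q + c + 1) * a ≤ t * a :=
            mul_le_mul_of_nonneg_right h5 (by linarith)
          linarith [hta, hdms, hcn, hs', hcr]
        have hca : c * (a:ℤ) ≤ c * (r + q + 1) := mul_le_mul_of_nonneg_left hrq' hc0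
        have hprod : (t:ℤ) * (a - 1) ≤ ((m:ℤ) + c * q + c) * (a - 1) :=
          mul_le_mul_of_nonneg_right ht_bound (by linarith)
        have : (m : ℤ) + s ≤ k := by linarith [hkey, hdms, hcn, hprod, hca]
        exact_mod_cast this
  have hne : Set.Nonempty {k | circSteps n (a : ℤ) (i : ZMod n) (j : ZMod n) k} := ⟨m + s, hmem⟩
  have h1 : circDist n (a : ℤ) (i : ZMod n) (j : ZMod n) ≤ m + s := Nat.sInf_le hmem
  have h2 : m + s ≤ circDist n (a : ℤ) (i : ZMod n) (j : ZMod n) := hlow _ (Nat.sInf_mem hne)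
  omega


theorem stmt9 (n a q r : ℕ)
    (h : (n = q * a ∧ 4 ≤ a ∧ 3 ≤ q) ∨
         (n = q * a + r ∧ 2 ≤ q ∧ 1 ≤ r ∧ r ≤ a - 1 ∧ 4 ≤ a ∧ a ≤ r + q + 1))
    (i j : ℕ) (hij : i < j) (hj : j ≤ n - 1) :
    (circDist n (a : ℤ) (i : ZMod n) (j : ZMod n) : ℤ) =
      ((j - i) / a : ℕ) * (1 - (a : ℤ)) + ((j : ℤ) - (i : ℤ)) := by
  have heq : circDist n (a : ℤ) (i : ZMod n) (j : ZMod n) = (j - i) / a + (j - i) % a := by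
    rcases h with ⟨hn, ha, _⟩ | ⟨hn, _, _, hra, ha, harq⟩
    · exact circDist_main n a q 0 ha (by omega) (by omega) (Or.inl rfl) i j hij hj
    · exact circDist_main n a q r ha hn hra (Or.inr harq) i j hij hj
  have ha : 4 ≤ a := by rcases h with ⟨_, ha, _⟩ | ⟨_, _, _, _, ha, _⟩ <;> exact ha
  have h1 : (a : ℤ) * (((j - i) / a : ℕ) : ℤ) + (((j - i) % a : ℕ) : ℤ) = ((j - i : ℕ) : ℤ) := by
    exact_mod_cast Nat.div_add_mod (j - i) a
  have h2 : ((j - i : ℕ) : ℤ) = (j : ℤ) - i := by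
    rw [Nat.cast_sub hij.le]
  rw [heq]
  push_cast at h1 ⊢
  linarith
end

section
/- Let n = qa with a ≥ 4 and q ≥ 3, or n = qa + r with q ≥ 2, 1 ≤ r ≤ a-1 and 4 ≤ a ≤ r + q + 1. Then the diameter of the oriented circulant graph C⃗(n;1,a) equals q + a - 2, achieved by the distance from v_0 to v_{qa-1}. -/
lemma circSteps_succ {n : ℕ} {a : ℤ} {u w v : ZMod n} {k : ℕ}
    (h : circSteps n a u w k) (harc : circArc n a w v) : circSteps n a u v (k + 1) := by
  obtain ⟨g, h0, hk, hstep⟩ := h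
  refine ⟨fun m => if m = k + 1 then v else g m, ?_, ?_, ?_⟩
  · show (if 0 = k + 1 then v else g 0) = u
    rw [if_neg (by omega), h0]
  · show (if k + 1 = k + 1 then v else g (k + 1)) = v
    rw [if_pos rfl]
  intro i hi
  show circArc n a (if i = k + 1 then v else g i) (if i + 1 = k + 1 then v else g (i + 1))
  have hik : i ≠ k + 1 := by omega
  simp only [if_neg hik]
  by_cases h2 : i = k
  · subst h2
    simp only [if_pos rfl]
    rw [hk]
    exact harc
  · rw [if_neg (by omega)]
    exact hstep i (by omega)

lemma circSteps_iff (n : ℕ) (a : ℤ) (u : ZMod n) (k : ℕ) : ∀ v,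
    circSteps n a u v k ↔
      ∃ i j : ℕ, i + j = k ∧ v = u + (i : ZMod n) + (j : ZMod n) * (a : ZMod n) := by
  induction k with
  | zero =>
    intro v
    constructor
    · rintro ⟨g, h0, hk, _⟩
      exact ⟨0, 0, rfl, by simp [← h0, ← hk]⟩
    · rintro ⟨i, j, hij, hv⟩
      obtain ⟨rfl, rfl⟩ : i = 0 ∧ j = 0 := by omega
      refine ⟨fun _ => u, rfl, ?_, fun i hi => absurd hi (Nat.not_lt_zero i)⟩
      simp [hv]
  | succ k ih =>
    intro v
    constructor
    · rintro ⟨g, h0, hk, hstep⟩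
      obtain ⟨i, j, hij, hw⟩ := (ih (g k)).mp ⟨g, h0, rfl, fun i hi => hstep i (by omega)⟩
      rcases hstep k (by omega) with h1 | h1
      · exact ⟨i + 1, j, by omega, by rw [← hk, h1, hw]; push_cast; ring⟩
      · exact ⟨i, j + 1, by omega, by rw [← hk, h1, hw]; push_cast; ring⟩
    · rintro ⟨i, j, hij, hv⟩
      rcases Nat.eq_zero_or_pos i with rfl | hi
      · obtain ⟨j', rfl⟩ : ∃ j', j = j' + 1 := ⟨j - 1, by omega⟩
        have hw : circSteps n a u (u + ((0:ℕ) : ZMod n) + ((j' : ℕ) : ZMod n) * (a : ZMod n)) k :=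
          (ih _).mpr ⟨0, j', by omega, rfl⟩
        exact circSteps_succ hw (Or.inr (by rw [hv]; push_cast; ring))
      · obtain ⟨i', rfl⟩ : ∃ i', i = i' + 1 := ⟨i - 1, by omega⟩
        have hw : circSteps n a u (u + ((i' : ℕ) : ZMod n) + ((j : ℕ) : ZMod n) * (a : ZMod n)) k :=
          (ih _).mpr ⟨i', j, by omega, rfl⟩
        exact circSteps_succ hw (Or.inl (by rw [hv]; push_cast; ring))

lemma int_ineq1 (a q N i j : ℤ) (ha : 4 ≤ a) (hq : 2 ≤ q) (hN : 0 ≤ N) (hi : 0 ≤ i) (hj : 0 ≤ j)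
    (heq : i + j * a = (N + 1) * q * a - 1) : q + a - 2 ≤ i + j := by
  have hj' : j ≤ (N + 1) * q - 1 := by
    by_contra hcon
    push_neg at hcon
    have h1 : (N + 1) * q * a ≤ j * a :=
      mul_le_mul_of_nonneg_right (by linarith) (by linarith)
    linarith
  have h2 : j * (a - 1) ≤ ((N + 1) * q - 1) * (a - 1) :=
    mul_le_mul_of_nonneg_right hj' (by linarith)
  have h3 : 0 ≤ N * q := mul_nonneg hN (by linarith)
  nlinarith [h2, h3]

lemma int_ineq2 (a q r N i j : ℤ) (ha : 4 ≤ a) (hq : 2 ≤ q) (hr1 : 1 ≤ r) (hra : r + 1 ≤ a)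
    (har : a ≤ r + q + 1) (hN : 0 ≤ N) (hi : 0 ≤ i) (hj : 0 ≤ j)
    (heq : i + j * a = (N + 1) * q * a + N * r - 1) : q + a - 2 ≤ i + j := by
  have hNr : N * r ≤ N * (a - 1) := mul_le_mul_of_nonneg_left (by linarith) hN
  have hj' : j ≤ (N + 1) * q + N - 1 := by
    by_contra hcon
    push_neg at hcon
    have h1 : ((N + 1) * q + N) * a ≤ j * a :=
      mul_le_mul_of_nonneg_right (by linarith) (by linarith)
    nlinarith
  have h2 : j * (a - 1) ≤ ((N + 1) * q + N - 1) * (a - 1) :=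
    mul_le_mul_of_nonneg_right hj' (by linarith)
  have h3 : 0 ≤ N * (r + q + 1 - a) := mul_nonneg hN (by linarith)
  nlinarith [h2, h3]

lemma keyLower (n a q R i j N : ℕ) (hq : 2 ≤ q) (ha : 4 ≤ a)
    (hnR : n = q * a + R) (hRa : R + 1 ≤ a)
    (hcase : R = 0 ∨ (1 ≤ R ∧ a ≤ R + q + 1))
    (heq : i + j * a + 1 = n * N + q * a) : q + a ≤ i + j + 2 := by
  subst hnR
  have haz : (4:ℤ) ≤ (a:ℤ) := by exact_mod_cast ha
  have hqz : (2:ℤ) ≤ (q:ℤ) := by exact_mod_cast hq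
  have heqz : (i:ℤ) + (j:ℤ) * a + 1 = ((q:ℤ) * a + R) * N + (q:ℤ) * a := by exact_mod_cast heq
  have key : (q:ℤ) + a - 2 ≤ (i:ℤ) + j := by
    rcases hcase with rfl | ⟨hR1, hRq⟩
    · refine int_ineq1 a q N i j haz hqz (by positivity) (by positivity) (by positivity) ?_
      push_cast at heqz ⊢
      linarith
    · exact int_ineq2 a q R N i j haz hqz (by exact_mod_cast hR1)
        (by exact_mod_cast hRa) (by exact_mod_cast hRq) (by positivity) (by positivity)
        (by positivity) (by linarith [heqz])
  have hfin : (q:ℤ) + a ≤ (i:ℤ) + j + 2 := by linarith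
  exact_mod_cast hfin

lemma circDist_shift (n : ℕ) (a : ℤ) (u v : ZMod n) :
    circDist n a u v = circDist n a 0 (v - u) := by
  have hset : {k | circSteps n a u v k} = {k | circSteps n a 0 (v - u) k} := by
    ext k
    simp only [Set.mem_setOf_eq]
    rw [circSteps_iff n a u k v, circSteps_iff n a 0 k (v - u)]
    constructor
    · rintro ⟨i, j, h1, h2⟩
      exact ⟨i, j, h1, by rw [h2]; ring⟩
    · rintro ⟨i, j, h1, h2⟩
      refine ⟨i, j, h1, ?_⟩
      have hv : v = u + (v - u) := by ring
      rw [hv, h2]; ring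
  unfold circDist
  rw [hset]

lemma circEcc_shift (n : ℕ) (a : ℤ) (u : ZMod n) : circEcc n a u = circEcc n a 0 := by
  unfold circEcc
  congr 1
  ext d
  simp only [Set.mem_setOf_eq]
  constructor
  · rintro ⟨v, rfl⟩
    exact ⟨v - u, by rw [circDist_shift]⟩
  · rintro ⟨w, rfl⟩
    refine ⟨u + w, ?_⟩
    rw [circDist_shift n a u (u + w)]
    congr 1
    ring

theorem stmt10 (n a q r : ℕ)
    (h : (n = q * a ∧ 4 ≤ a ∧ 3 ≤ q) ∨
         (n = q * a + r ∧ 2 ≤ q ∧ 1 ≤ r ∧ r ≤ a - 1 ∧ 4 ≤ a ∧ a ≤ r + q + 1)) :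
    circDiam n (a : ℤ) = q + a - 2 ∧
    circDist n (a : ℤ) 0 ((q * a - 1 : ℕ) : ZMod n) = q + a - 2 := by
  obtain ⟨R, hnR, hRa, hq, ha, hcase⟩ :
      ∃ R, n = q * a + R ∧ R + 1 ≤ a ∧ 2 ≤ q ∧ 4 ≤ a ∧ (R = 0 ∨ (1 ≤ R ∧ a ≤ R + q + 1)) := by
    rcases h with ⟨hn, ha, hq⟩ | ⟨hn, hq, hr1, hr2, ha, har⟩
    · exact ⟨0, by simp [hn], by omega, by omega, ha, Or.inl rfl⟩
    · exact ⟨r, hn, by omega, hq, ha, Or.inr ⟨hr1, har⟩⟩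
  have hqa8 : 8 ≤ q * a := le_trans (by norm_num) (Nat.mul_le_mul hq ha)
  have hqa1 : 1 ≤ q * a := by linarith
  have hqan : q * a ≤ n := by rw [hnR]; exact Nat.le_add_right _ _
  have hn0 : 0 < n := lt_of_lt_of_le (by linarith) hqan
  haveI : NeZero n := ⟨by omega⟩
  have hBn : q * a - 1 < n :=
    lt_of_lt_of_le (Nat.sub_lt (by linarith) one_pos) hqan
  -- distance to q*a - 1
  have hup : circSteps n ((a : ℕ) : ℤ) 0 ((q * a - 1 : ℕ) : ZMod n) (q + a - 2) := by
    refine (circSteps_iff n _ 0 (q + a - 2) _).mpr ⟨a - 1, q - 1, by omega, ?_⟩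
    rw [Nat.cast_sub hqa1, Nat.cast_sub (by omega : 1 ≤ a), Nat.cast_sub (by omega : 1 ≤ q)]
    push_cast
    ring
  have hlow : ∀ k, circSteps n ((a : ℕ) : ℤ) 0 ((q * a - 1 : ℕ) : ZMod n) k → q + a - 2 ≤ k := by
    intro k hk
    obtain ⟨i, j, hij, hv⟩ := (circSteps_iff n _ 0 k _).mp hk
    have hzz : ((i + j * a : ℕ) : ZMod n) = ((q * a - 1 : ℕ) : ZMod n) := by
      have h1 : ((i + j * a : ℕ) : ZMod n)
          = 0 + (i : ZMod n) + (j : ZMod n) * (((a : ℕ) : ℤ) : ZMod n) := by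
        push_cast
        ring
      exact h1.trans hv.symm
    have hmod : (i + j * a) % n = (q * a - 1) % n :=
      (ZMod.natCast_eq_natCast_iff _ _ _).mp hzz
    have hmod' : (i + j * a) % n = q * a - 1 := by
      rw [hmod, Nat.mod_eq_of_lt hBn]
    have hdm := Nat.div_add_mod (i + j * a) n
    have heq : i + j * a + 1 = n * ((i + j * a) / n) + q * a := by
      calc i + j * a + 1 = (n * ((i + j * a) / n) + (i + j * a) % n) + 1 := by rw [hdm]
        _ = n * ((i + j * a) / n) + ((q * a - 1) + 1) := by rw [hmod', Nat.add_assoc]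
        _ = n * ((i + j * a) / n) + q * a := by rw [Nat.sub_add_cancel hqa1]
    have := keyLower n a q R i j ((i + j * a) / n) hq ha hnR hRa hcase heq
    omega
  have hdist : circDist n ((a : ℕ) : ℤ) 0 ((q * a - 1 : ℕ) : ZMod n) = q + a - 2 := by
    have hne : {k | circSteps n ((a : ℕ) : ℤ) 0 ((q * a - 1 : ℕ) : ZMod n) k}.Nonempty :=
      ⟨_, hup⟩
    exact le_antisymm (Nat.sInf_le hup) (hlow _ (Nat.sInf_mem hne))
  -- upper bound for all vertices
  have hub : ∀ v : ZMod n, circDist n ((a : ℕ) : ℤ) 0 v ≤ q + a - 2 := by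
    intro v
    have hmn : v.val < n := ZMod.val_lt v
    have hia : v.val % a < a := Nat.mod_lt _ (by omega)
    have hrepr : v.val % a + (v.val / a) * a = v.val := Nat.mod_add_div' v.val a
    have hjq : v.val / a ≤ q := by
      have hqa' : (q + 1) * a = q * a + a := by ring
      have h1 : v.val < (q + 1) * a := by
        rw [hqa']
        calc v.val < n := hmn
          _ = q * a + R := hnR
          _ ≤ q * a + a := Nat.add_le_add_left (by omega) _
      have := (Nat.div_lt_iff_lt_mul (show 0 < a by omega)).mpr h1
      omega
    have hij : v.val % a + v.val / a + 2 ≤ q + a := by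
      rcases Nat.lt_or_ge (v.val / a) q with hlt | hge
      · omega
      · have hjq' : v.val / a = q := le_antisymm hjq hge
        have h2 : v.val % a + q * a < q * a + R := by
          calc v.val % a + q * a = v.val % a + (v.val / a) * a := by rw [hjq']
            _ = v.val := hrepr
            _ < n := hmn
            _ = q * a + R := hnR
        have h3 : v.val % a < R := by
          have h2' : v.val % a + q * a < R + q * a := by
            rw [Nat.add_comm R (q * a)]; exact h2
          exact Nat.lt_of_add_lt_add_right h2'
        omega
    have hst : circSteps n ((a : ℕ) : ℤ) 0 v (v.val % a + v.val / a) := by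
      refine (circSteps_iff n _ 0 _ v).mpr ⟨v.val % a, v.val / a, rfl, ?_⟩
      have hv : v = ((v.val : ℕ) : ZMod n) := (ZMod.natCast_zmod_val v).symm
      conv_lhs => rw [hv, ← hrepr]
      push_cast
      ring
    calc circDist n ((a : ℕ) : ℤ) 0 v ≤ v.val % a + v.val / a := Nat.sInf_le hst
      _ ≤ q + a - 2 := by omega
  have hecc0 : circEcc n ((a : ℕ) : ℤ) 0 = q + a - 2 := by
    unfold circEcc
    apply le_antisymm
    · refine csSup_le ⟨q + a - 2, _, hdist.symm⟩ ?_
      rintro d ⟨v, rfl⟩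
      exact hub v
    · refine le_csSup ⟨q + a - 2, ?_⟩ ⟨_, hdist.symm⟩
      rintro d ⟨v, rfl⟩
      exact hub v
  refine ⟨?_, hdist⟩
  unfold circDiam
  have hset : {d | ∃ u : ZMod n, d = circEcc n ((a : ℕ) : ℤ) u} = {q + a - 2} := by
    ext d
    simp only [Set.mem_setOf_eq, Set.mem_singleton_iff]
    constructor
    · rintro ⟨u, rfl⟩
      rw [circEcc_shift, hecc0]
    · rintro rfl
      exact ⟨0, hecc0.symm⟩
  rw [hset, csSup_singleton]
end

section
/- Let n = k(a-1) + s with a ≥ 4 and 0 ≤ s ≤ min{a,k} - 2. Then the broadcast independence number of C⃗(n;1,a) is at least k(a-2) when s = 0, at least (k-1)(a-2)+1 when s = 1, and at least (k-s)(a-2)+(s-1)(s+1) when s ≥ 2. -/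
namespace Aux

lemma steps_iff {n : ℕ} {b : ℤ} (u v : ZMod n) (L : ℕ) :
    circSteps n b u v L ↔
      ∃ m, m ≤ L ∧ v = u + ((L - m : ℕ) : ZMod n) + (m : ZMod n) * (b : ZMod n) := by
  constructor
  · intro h
    induction L generalizing v with
    | zero =>
        obtain ⟨g, h0, hL, _⟩ := h
        exact ⟨0, le_rfl, by simp [← hL, h0]⟩
    | succ L ih =>
        obtain ⟨g, h0, hL, harc⟩ := h
        obtain ⟨m, hm, hw⟩ := ih (g L) ⟨g, h0, rfl, fun i hi => harc i (Nat.lt_succ_of_lt hi)⟩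
        rcases harc L (Nat.lt_succ_self L) with h1 | h2
        · refine ⟨m, Nat.le_succ_of_le hm, ?_⟩
          have hc : ((L + 1 - m : ℕ) : ZMod n) = ((L - m : ℕ) : ZMod n) + 1 := by
            have h' : L + 1 - m = (L - m) + 1 := by omega
            rw [h']; push_cast; ring
          rw [← hL, h1, hw, hc]; ring
        · refine ⟨m + 1, Nat.succ_le_succ hm, ?_⟩
          have hc : (L + 1 - (m + 1) : ℕ) = (L - m : ℕ) := by omega
          rw [← hL, h2, hw, hc]; push_cast; ring
  · rintro ⟨m, hm, hv⟩
    refine ⟨fun i => u + ((min i m : ℕ) : ZMod n) * (b : ZMod n) + ((i - m : ℕ) : ZMod n),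
      by simp, ?_, ?_⟩
    · show u + ((min L m : ℕ) : ZMod n) * (b : ZMod n) + ((L - m : ℕ) : ZMod n) = v
      rw [hv, min_eq_right hm]; ring
    · intro i hi
      rcases lt_or_ge i m with him | him
      · right
        beta_reduce
        rw [min_eq_left (by omega : i + 1 ≤ m), min_eq_left (by omega : i ≤ m)]
        have h1 : i - m = 0 := by omega
        have h2 : i + 1 - m = 0 := by omega
        rw [h1, h2]; push_cast; ring
      · left
        beta_reduce
        rw [min_eq_right him, min_eq_right (by omega : m ≤ i + 1)]
        have h' : i + 1 - m = (i - m) + 1 := by omega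
        rw [h']; push_cast; ring

lemma steps_val {n : ℕ} [NeZero n] {b : ℤ} (u v : ZMod n) :
    circSteps n b u v ((v - u).val) := by
  rw [steps_iff]
  refine ⟨0, Nat.zero_le _, ?_⟩
  simp [ZMod.natCast_rightInverse (v - u)]

lemma dist_le_steps {n : ℕ} {b : ℤ} {u v : ZMod n} {L : ℕ} (h : circSteps n b u v L) :
    circDist n b u v ≤ L := Nat.sInf_le h

lemma dist_lt_n {n : ℕ} [NeZero n] {b : ℤ} (u v : ZMod n) : circDist n b u v < n :=
  lt_of_le_of_lt (dist_le_steps (steps_val u v)) ((v - u).val_lt)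

lemma dist_lb {n : ℕ} [NeZero n] {b : ℤ} (u v : ZMod n) (B : ℕ)
    (h : ∀ L, circSteps n b u v L → B ≤ L) : B ≤ circDist n b u v :=
  le_csInf ⟨(v - u).val, steps_val u v⟩ h

lemma dist_le_ecc {n : ℕ} [NeZero n] {b : ℤ} (u v : ZMod n) :
    circDist n b u v ≤ circEcc n b u :=
  le_csSup ⟨n, by rintro d ⟨w, rfl⟩; exact (dist_lt_n u w).le⟩ ⟨v, rfl⟩

lemma ecc_le_n {n : ℕ} [NeZero n] {b : ℤ} (u : ZMod n) : circEcc n b u ≤ n :=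
  csSup_le ⟨circDist n b u u, u, rfl⟩ (by rintro d ⟨w, rfl⟩; exact (dist_lt_n u w).le)

lemma betaB_ge {n : ℕ} [NeZero n] {b : ℤ} (f : ZMod n → ℕ) (hf : IsIndepBroadcast n b f) :
    circCost n f ≤ betaB n b := by
  refine le_csSup ⟨n * n, ?_⟩ ⟨f, hf, rfl⟩
  rintro c ⟨g, hg, rfl⟩
  calc circCost n g ≤ ∑ _i ∈ Finset.range n, n :=
        Finset.sum_le_sum (fun i _ => (hg.1 _).trans (ecc_le_n _))
    _ = n * n := by simp [Finset.sum_const, Finset.card_range, Nat.smul_one_eq_cast]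
  
lemma conv {n : ℕ} (hn : 0 < n) {aa : ℕ} (ha : 1 ≤ aa) {u v : ZMod n} {d0 : ℕ}
    (hd : v = u + (d0 : ZMod n)) (h1 : 1 ≤ d0) (h2 : d0 < n) {L m : ℕ} (hm : m ≤ L)
    (heq : v = u + ((L - m : ℕ) : ZMod n) + (m : ZMod n) * (((aa : ℤ)) : ZMod n)) :
    ∃ t : ℤ, 0 ≤ t ∧ (L : ℤ) + m * ((aa : ℤ) - 1) = d0 + t * n ∧ 1 ≤ L := by
  have h4 : (d0 : ZMod n) = (((L - m) + m * aa : ℕ) : ZMod n) := by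
    have h5 : u + (d0 : ZMod n) = u + (((L - m) + m * aa : ℕ) : ZMod n) := by
      rw [← hd, heq]; push_cast; ring
    exact add_left_cancel h5
  have h6 : d0 ≡ (L - m) + m * aa [MOD n] := (ZMod.natCast_eq_natCast_iff _ _ _).1 h4
  obtain ⟨t, ht⟩ := h6.dvd
  have hsub : ((L - m : ℕ) : ℤ) = (L : ℤ) - m := by
    have := Nat.cast_sub hm (R := ℤ); exact this
  have heqZ : (L : ℤ) + m * ((aa : ℤ) - 1) = d0 + t * n := by
    have : ((L - m) + m * aa : ℕ) = (d0 : ℤ) + (n : ℤ) * t := by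
      omega
    push_cast [hsub] at this
    linarith [this]
  have haa : (1 : ℤ) ≤ (aa : ℤ) := by exact_mod_cast ha
  have hmnn : (0 : ℤ) ≤ (m : ℤ) * ((aa : ℤ) - 1) :=
    mul_nonneg (Int.natCast_nonneg m) (by linarith)
  have hn' : (0 : ℤ) < n := by exact_mod_cast hn
  have htnn : 0 ≤ t := by
    by_contra hlt
    push_neg at hlt
    have h7 : t ≤ -1 := by omega
    have : t * (n : ℤ) ≤ (-1) * n := mul_le_mul_of_nonneg_right h7 (by linarith)
    have hLnn : (0 : ℤ) ≤ L := Int.natCast_nonneg L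
    have hd0' : (d0 : ℤ) < n := by exact_mod_cast h2
    linarith
  refine ⟨t, htnn, heqZ, ?_⟩
  rcases Nat.eq_zero_or_pos L with hL0 | hL1
  · exfalso
    have hm0 : m = 0 := by omega
    subst hL0; subst hm0
    have htn : 0 ≤ t * (n : ℤ) := mul_nonneg htnn (by linarith)
    have hd0' : (1 : ℤ) ≤ d0 := by exact_mod_cast h1
    simp at heqZ
    linarith
  · exact hL1

lemma core {a s k C r0 L m : ℕ} {t : ℤ} (ha : 4 ≤ a) (hsa : s + 2 ≤ a) (hsk : s + 2 ≤ k)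
    (ht : 0 ≤ t) (hm : m ≤ L)
    (heq : (L : ℤ) + m * ((a : ℤ) - 1)
      = C * ((a : ℤ) - 1) + r0 + t * (k * ((a : ℤ) - 1) + s)) :
    ((r0 = 0 ∧ 1 ≤ C) ∨ (r0 = s ∧ s + 1 ≤ C) → ((a : ℤ) - 1 + r0 ≤ L)) ∧
      (r0 = s → (s : ℤ) ≤ L) := by
  have ha' : (4 : ℤ) ≤ a := by exact_mod_cast ha
  have hsa' : (s : ℤ) + 2 ≤ a := by exact_mod_cast hsa
  have hsk' : (s : ℤ) + 2 ≤ k := by exact_mod_cast hsk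
  have hm' : (m : ℤ) ≤ L := by exact_mod_cast hm
  have hm0 : (0 : ℤ) ≤ m := Int.natCast_nonneg m
  have hr0nn : (0 : ℤ) ≤ r0 := Int.natCast_nonneg r0
  have hCnn : (0 : ℤ) ≤ C := Int.natCast_nonneg C
  have htk : t * ((s : ℤ) + 2) ≤ t * k := mul_le_mul_of_nonneg_left hsk' ht
  have hts : (0 : ℤ) ≤ t * s := mul_nonneg ht (Int.natCast_nonneg s)
  set D : ℤ := (C : ℤ) + t * k - m with hDdef
  have hL' : (L : ℤ) = D * ((a : ℤ) - 1) + r0 + t * s := by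
    rw [hDdef]; linear_combination heq
  constructor
  · rintro (⟨hr0, hC⟩ | ⟨hr0, hC⟩)
    · have hC' : (1 : ℤ) ≤ C := by exact_mod_cast hC
      have hr0' : (r0 : ℤ) = 0 := by exact_mod_cast hr0
      rcases le_or_gt 1 D with hD1 | hD1
      · have hmul : ((a : ℤ) - 1) ≤ D * ((a : ℤ) - 1) :=
          le_mul_of_one_le_left (by linarith) hD1
        linarith
      · exfalso
        have hD0 : D ≤ 0 := by omega
        have hLle : (L : ℤ) ≤ (r0 : ℤ) + t * s := by
          nlinarith [mul_nonpos_of_nonpos_of_nonneg hD0 (show (0:ℤ) ≤ (a:ℤ) - 1 by linarith)]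
        have hLge : (C : ℤ) + t * k ≤ L := by
          have : (C : ℤ) + t * k ≤ m := by omega
          linarith
        linarith
    · have hC' : (s : ℤ) + 1 ≤ C := by exact_mod_cast hC
      have hr0' : (r0 : ℤ) = s := by exact_mod_cast hr0
      rcases le_or_gt 1 D with hD1 | hD1
      · have hmul : ((a : ℤ) - 1) ≤ D * ((a : ℤ) - 1) :=
          le_mul_of_one_le_left (by linarith) hD1
        linarith
      · exfalso
        have hD0 : D ≤ 0 := by omega
        have hLle : (L : ℤ) ≤ (r0 : ℤ) + t * s := by
          nlinarith [mul_nonpos_of_nonpos_of_nonneg hD0 (show (0:ℤ) ≤ (a:ℤ) - 1 by linarith)]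
        have hLge : (C : ℤ) + t * k ≤ L := by
          have : (C : ℤ) + t * k ≤ m := by omega
          linarith
        linarith
  · intro hr0
    have hr0' : (r0 : ℤ) = s := by exact_mod_cast hr0
    rcases le_or_gt 1 D with hD1 | hD1
    · have hmul : ((a : ℤ) - 1) ≤ D * ((a : ℤ) - 1) :=
        le_mul_of_one_le_left (by linarith) hD1
      linarith
    · have hD0 : D ≤ 0 := by omega
      have hLge : (C : ℤ) + t * k ≤ L := by
        have : (C : ℤ) + t * k ≤ m := by omega
        linarith
      rcases eq_or_lt_of_le ht with ht0 | ht1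
      · -- t = 0
        have ht0' : t = 0 := ht0.symm
        subst ht0'
        rcases lt_or_eq_of_le hD0 with hDlt | hDeq
        · exfalso
          have hD1' : D ≤ -1 := by omega
          have : D * ((a : ℤ) - 1) ≤ (-1) * ((a : ℤ) - 1) :=
            mul_le_mul_of_nonneg_right hD1' (by linarith)
          have hLnn : (0 : ℤ) ≤ L := Int.natCast_nonneg L
          linarith
        · rw [hDeq] at hL'; simp at hL'; linarith
      · have ht1' : (1 : ℤ) ≤ t := by omega
        have : ((s : ℤ) + 2) ≤ t * ((s : ℤ) + 2) :=
          le_mul_of_one_le_left (by linarith) ht1'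
        linarith

lemma pair_dist {n a s k : ℕ} (hn : n = k * (a - 1) + s) (ha : 4 ≤ a)
    (hsa : s + 2 ≤ a) (hsk : s + 2 ≤ k) [NeZero n] (u v : ZMod n) (C r0 : ℕ)
    (hd : v = u + ((C * (a - 1) + r0 : ℕ) : ZMod n))
    (h1 : 1 ≤ C * (a - 1) + r0) (h2 : C * (a - 1) + r0 < n) :
    ((r0 = 0 ∧ 1 ≤ C) ∨ (r0 = s ∧ s + 1 ≤ C) → a - 1 + r0 ≤ circDist n (a : ℤ) u v) ∧
      (r0 = s → s ≤ circDist n (a : ℤ) u v) := by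
  have hn0 : 0 < n := Nat.pos_of_ne_zero (NeZero.ne n)
  have ha1 : (1 : ℕ) ≤ a := by omega
  have key : ∀ L, circSteps n (a : ℤ) u v L →
      (((r0 = 0 ∧ 1 ≤ C) ∨ (r0 = s ∧ s + 1 ≤ C)) → ((a : ℤ) - 1 + r0 ≤ L)) ∧
        (r0 = s → (s : ℤ) ≤ L) := by
    intro L hsteps
    rw [steps_iff] at hsteps
    obtain ⟨m, hm, heq⟩ := hsteps
    obtain ⟨t, ht, heqZ, hL1⟩ := conv hn0 ha1 hd h1 h2 hm heq
    have hcast1 : ((C * (a - 1) + r0 : ℕ) : ℤ) = (C : ℤ) * ((a : ℤ) - 1) + r0 := by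
      push_cast [Nat.cast_sub ha1]; ring
    have hcast2 : ((n : ℕ) : ℤ) = (k : ℤ) * ((a : ℤ) - 1) + s := by
      rw [hn]; push_cast [Nat.cast_sub ha1]; ring
    rw [hcast1, hcast2] at heqZ
    exact core ha hsa hsk ht hm heqZ
  constructor
  · intro hyp
    apply dist_lb
    intro L hL
    have := (key L hL).1 hyp
    omega
  · intro hyp
    apply dist_lb
    intro L hL
    have := (key L hL).2 hyp
    omega

/-- Broadcast supported on multiples of (a-1) up to Q*(a-1), with values W. -/
def brc (n a Q : ℕ) (W : ℕ → ℕ) : ZMod n → ℕ := fun x =>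
  if (a - 1) ∣ x.val ∧ x.val / (a - 1) ≤ Q then W (x.val / (a - 1)) else 0

lemma construction {n a s k Q : ℕ} (hn : n = k * (a - 1) + s) (ha : 4 ≤ a)
    (hsa : s + 2 ≤ a) (hsk : s + 2 ≤ k) (W : ℕ → ℕ)
    (hQ : Q ≤ k) (hQn : Q * (a - 1) < n)
    (hWub : ∀ q, q ≤ Q → W q ≤ a - 1)
    (hfwd : ∀ q1, q1 < Q → W q1 < a - 1)
    (hbwd : ∀ q1 q2, q2 < q1 → q1 ≤ Q →
      (W q1 < a - 1 + s ∧ s + 1 ≤ k - (q1 - q2)) ∨ (1 ≤ s ∧ W q1 < s)) :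
    IsIndepBroadcast n (a : ℤ) (brc n a Q W) ∧
      (∑ q ∈ Finset.range (Q + 1), W q) ≤ circCost n (brc n a Q W) := by
  have ha1 : 0 < a - 1 := by omega
  have hn0 : 0 < n := by
    have h1 : 1 * 1 ≤ k * (a - 1) := Nat.mul_le_mul (by omega) (by omega)
    omega
  haveI : NeZero n := ⟨hn0.ne'⟩
  have ha1n : a - 1 < n := by
    have h2 : 2 * (a - 1) ≤ k * (a - 1) := Nat.mul_le_mul_right _ (by omega)
    omega
  -- extraction
  have hfe : ∀ x : ZMod n, 0 < brc n a Q W x →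
      ∃ q, q ≤ Q ∧ x = ((q * (a - 1) : ℕ) : ZMod n) ∧ brc n a Q W x = W q := by
    intro x hx
    unfold brc at hx
    split at hx
    · rename_i h
      obtain ⟨hdvd, hle⟩ := h
      refine ⟨x.val / (a - 1), hle, ?_, ?_⟩
      · rw [Nat.div_mul_cancel hdvd]
        exact (ZMod.natCast_rightInverse x).symm
      · unfold brc
        rw [if_pos ⟨hdvd, hle⟩]
    · omega
  -- eccentricity lower bound
  have hecc : ∀ u : ZMod n, a - 1 ≤ circEcc n (a : ℤ) u := by
    intro u
    have hp := pair_dist hn ha hsa hsk u (u + ((1 * (a - 1) + 0 : ℕ) : ZMod n)) 1 0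
      rfl (by omega) (by omega)
    have := hp.1 (Or.inl ⟨rfl, le_rfl⟩)
    calc a - 1 ≤ a - 1 + 0 := by omega
      _ ≤ circDist n (a : ℤ) u _ := this
      _ ≤ circEcc n (a : ℤ) u := dist_le_ecc _ _
  refine ⟨⟨?_, ?_⟩, ?_⟩
  · -- f v ≤ ecc v
    intro v
    rcases Nat.eq_zero_or_pos (brc n a Q W v) with h0 | hpos
    · omega
    · obtain ⟨q, hq, _, hval⟩ := hfe v hpos
      have := hWub q hq
      have := hecc v
      omega
  · -- independence
    intro u v huv hu hv
    obtain ⟨q1, hq1, hueq, hfu⟩ := hfe u hu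
    obtain ⟨q2, hq2, hveq, hfv⟩ := hfe v hv
    have hqne : q1 ≠ q2 := by
      rintro rfl; exact huv (hueq.trans hveq.symm)
    rcases Nat.lt_or_ge q1 q2 with hlt | hge
    · -- forward
      have hd : v = u + (((q2 - q1) * (a - 1) + 0 : ℕ) : ZMod n) := by
        have hN : q1 * (a - 1) + ((q2 - q1) * (a - 1) + 0) = q2 * (a - 1) := by
          rw [Nat.add_zero, ← Nat.add_mul]; congr 1; omega
        rw [hueq, hveq, ← Nat.cast_add, hN]
      have h1' : 1 ≤ (q2 - q1) * (a - 1) + 0 := by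
        have : 1 * 1 ≤ (q2 - q1) * (a - 1) := Nat.mul_le_mul (by omega) (by omega)
        omega
      have h2' : (q2 - q1) * (a - 1) + 0 < n := by
        have : (q2 - q1) * (a - 1) ≤ Q * (a - 1) := Nat.mul_le_mul_right _ (by omega)
        omega
      have hp := (pair_dist hn ha hsa hsk u v (q2 - q1) 0 hd h1' h2').1
        (Or.inl ⟨rfl, by omega⟩)
      have hWlt := hfwd q1 (by omega)
      omega
    · -- backward: q2 < q1
      have hlt : q2 < q1 := by omega
      set C := k - (q1 - q2) with hC
      have hCk : C ≤ k - 1 := by omega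
      have hd : v = u + ((C * (a - 1) + s : ℕ) : ZMod n) := by
        have hN : q1 * (a - 1) + (C * (a - 1) + s) = q2 * (a - 1) + n := by
          rw [hn, ← Nat.add_assoc, ← Nat.add_mul, ← Nat.add_assoc, ← Nat.add_mul]
          congr 2
          omega
        have := congrArg (fun (x : ℕ) => (x : ZMod n)) hN
        push_cast at this
        rw [ZMod.natCast_self] at this
        rw [hueq, hveq]
        push_cast
        linear_combination -this
      have h2' : C * (a - 1) + s < n := by
        have h3 : C * (a - 1) < k * (a - 1) :=
          (Nat.mul_lt_mul_right ha1).mpr (by omega)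
        omega
      rcases hbwd q1 q2 hlt hq1 with ⟨hWlt, hCge⟩ | ⟨hs1, hWlt⟩
      · have h1' : 1 ≤ C * (a - 1) + s := by
          have : 1 * 1 ≤ C * (a - 1) := Nat.mul_le_mul (by omega) (by omega)
          omega
        have hp := (pair_dist hn ha hsa hsk u v C s hd h1' h2').1
          (Or.inr ⟨rfl, by omega⟩)
        omega
      · have h1' : 1 ≤ C * (a - 1) + s := by omega
        have hp := (pair_dist hn ha hsa hsk u v C s hd h1' h2').2 rfl
        omega
  · -- cost
    have himg : ∀ q, q ≤ Q → brc n a Q W ((q * (a - 1) : ℕ) : ZMod n) = W q := by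
      intro q hq
      have hlt : q * (a - 1) < n := by
        have : q * (a - 1) ≤ Q * (a - 1) := Nat.mul_le_mul_right _ hq
        omega
      have hval : ((q * (a - 1) : ℕ) : ZMod n).val = q * (a - 1) := by
        rw [ZMod.val_natCast, Nat.mod_eq_of_lt hlt]
      unfold brc
      rw [hval]
      rw [if_pos ⟨⟨q, by ring⟩, by rw [Nat.mul_div_cancel _ ha1]; exact hq⟩,
        Nat.mul_div_cancel _ ha1]
    have hsub : (Finset.range (Q + 1)).image (fun q => q * (a - 1)) ⊆ Finset.range n := by
      intro x hx
      simp only [Finset.mem_image, Finset.mem_range] at hx ⊢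
      obtain ⟨q, hq, rfl⟩ := hx
      have : q * (a - 1) ≤ Q * (a - 1) := Nat.mul_le_mul_right _ (by omega)
      omega
    have hinj : ∀ x ∈ Finset.range (Q + 1), ∀ y ∈ Finset.range (Q + 1),
        x * (a - 1) = y * (a - 1) → x = y := by
      intro x _ y _ hxy
      exact Nat.eq_of_mul_eq_mul_right ha1 hxy
    calc ∑ q ∈ Finset.range (Q + 1), W q
        = ∑ q ∈ Finset.range (Q + 1), brc n a Q W ((q * (a - 1) : ℕ) : ZMod n) := by
          apply Finset.sum_congr rfl
          intro q hq
          rw [himg q (by simpa using Nat.lt_succ_iff.mp (Finset.mem_range.mp hq))]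
      _ = ∑ i ∈ (Finset.range (Q + 1)).image (fun q => q * (a - 1)),
            brc n a Q W ((i : ℕ) : ZMod n) := (Finset.sum_image (f := fun i => brc n a Q W ((i : ℕ) : ZMod n)) hinj).symm
      _ ≤ ∑ i ∈ Finset.range n, brc n a Q W ((i : ℕ) : ZMod n) :=
          Finset.sum_le_sum_of_subset hsub
      _ = circCost n (brc n a Q W) := rfl

lemma special_k1 {n a : ℕ} (hn : n = a - 1) (ha : 4 ≤ a) : a - 2 ≤ betaB n (a : ℤ) := by
  have hn0 : 0 < n := by omega
  haveI : NeZero n := ⟨hn0.ne'⟩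
  set f : ZMod n → ℕ := fun x => if x = 0 then a - 2 else 0 with hf
  have hdist : a - 2 ≤ circDist n (a : ℤ) 0 ((a - 2 : ℕ) : ZMod n) := by
    apply dist_lb
    intro L hsteps
    rw [steps_iff] at hsteps
    obtain ⟨m, hm, heq⟩ := hsteps
    have hd : ((a - 2 : ℕ) : ZMod n) = 0 + ((a - 2 : ℕ) : ZMod n) := by rw [zero_add]
    obtain ⟨t, ht, heqZ, hL1⟩ := conv hn0 (by omega) hd (by omega) (by omega) hm heq
    have hc1 : ((a - 2 : ℕ) : ℤ) = (a : ℤ) - 2 := by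
      push_cast [Nat.cast_sub (by omega : 2 ≤ a)]; ring
    have hc2 : ((n : ℕ) : ℤ) = (a : ℤ) - 1 := by
      rw [hn]; push_cast [Nat.cast_sub (by omega : 1 ≤ a)]; ring
    rw [hc1, hc2] at heqZ
    have ha' : (4 : ℤ) ≤ a := by exact_mod_cast ha
    have hgoal : (a : ℤ) - 2 ≤ L := by
      rcases le_or_gt (m : ℤ) t with hmt | hmt
      · nlinarith [mul_nonneg (by linarith : (0:ℤ) ≤ t - m) (by linarith : (0:ℤ) ≤ (a:ℤ) - 1)]
      · exfalso
        have h7 : t - (m : ℤ) ≤ -1 := by omega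
        have : (t - (m : ℤ)) * ((a : ℤ) - 1) ≤ (-1) * ((a : ℤ) - 1) :=
          mul_le_mul_of_nonneg_right h7 (by linarith)
        have hLnn : (0 : ℤ) ≤ L := Int.natCast_nonneg L
        nlinarith
    omega
  have hind : IsIndepBroadcast n (a : ℤ) f := by
    constructor
    · intro v
      by_cases hv : v = 0
      · subst hv
        have h1 : f 0 = a - 2 := if_pos rfl
        rw [h1]
        exact hdist.trans (dist_le_ecc _ _)
      · have h1 : f v = 0 := if_neg hv
        rw [h1]; exact Nat.zero_le _
    · intro u v huv hu hv
      exfalso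
      by_cases hu0 : u = 0
      · by_cases hv0 : v = 0
        · exact huv (hu0.trans hv0.symm)
        · rw [hf] at hv; simp only [if_neg hv0] at hv; omega
      · rw [hf] at hu; simp only [if_neg hu0] at hu; omega
  have hcost : a - 2 ≤ circCost n f := by
    have h0 : f ((0 : ℕ) : ZMod n) = a - 2 := by
      rw [Nat.cast_zero]; exact if_pos rfl
    calc a - 2 = f ((0 : ℕ) : ZMod n) := h0.symm
      _ ≤ ∑ i ∈ Finset.range n, f ((i : ℕ) : ZMod n) :=
          Finset.single_le_sum (f := fun i => f ((i : ℕ) : ZMod n))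
            (fun i _ => Nat.zero_le _) (Finset.mem_range.mpr hn0)
      _ = circCost n f := rfl
  exact hcost.trans (betaB_ge f hind)

end Aux

theorem stmt13 (n a k s : ℕ) (hn : n = k * (a - 1) + s) (ha : 4 ≤ a)
    (hs : s ≤ min a k - 2) :
    (s = 0 → k * (a - 2) ≤ betaB n (a : ℤ)) ∧
    (s = 1 → (k - 1) * (a - 2) + 1 ≤ betaB n (a : ℤ)) ∧
    (2 ≤ s → (k - s) * (a - 2) + (s - 1) * (s + 1) ≤ betaB n (a : ℤ)) := by
  have hmina := min_le_left a k
  have hmink := min_le_right a k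
  refine ⟨?_, ?_, ?_⟩
  · -- s = 0
    rintro rfl
    by_cases hk2 : 2 ≤ k
    · have hQn : (k - 1) * (a - 1) < n := by
        have h3 : (k - 1) * (a - 1) < k * (a - 1) :=
          (Nat.mul_lt_mul_right (by omega)).mpr (by omega)
        omega
      have hWub : ∀ q, q ≤ k - 1 → (fun (_ : ℕ) => a - 2) q ≤ a - 1 := by
        intro q _; beta_reduce; omega
      have hfwd : ∀ q1, q1 < k - 1 → (fun (_ : ℕ) => a - 2) q1 < a - 1 := by
        intro q _; beta_reduce; omega
      have hbwd : ∀ q1 q2, q2 < q1 → q1 ≤ k - 1 →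
          ((fun (_ : ℕ) => a - 2) q1 < a - 1 + 0 ∧ 0 + 1 ≤ k - (q1 - q2)) ∨
            (1 ≤ 0 ∧ (fun (_ : ℕ) => a - 2) q1 < 0) := by
        intro q1 q2 h hq1; left
        constructor
        · beta_reduce; omega
        · omega
      have hc := Aux.construction (s := 0) (Q := k - 1) (W := fun _ => a - 2)
        hn ha (by omega) (by omega) (by omega) hQn hWub hfwd hbwd
      obtain ⟨hind, hcost⟩ := hc
      beta_reduce at hcost
      have hn0 : 0 < n := by
        have h1 : 1 * 1 ≤ k * (a - 1) := Nat.mul_le_mul (by omega) (by omega)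
        omega
      haveI : NeZero n := ⟨hn0.ne'⟩
      have hbb := Aux.betaB_ge _ hind
      have hsum : ∑ _q ∈ Finset.range (k - 1 + 1), (a - 2) = k * (a - 2) := by
        rw [Finset.sum_const, Finset.card_range, smul_eq_mul]
        congr 1
        omega
      omega
    · rcases (by omega : k = 0 ∨ k = 1) with rfl | rfl
      · simp
      · have h1 : 1 * (a - 2) = a - 2 := one_mul _
        rw [h1]
        exact Aux.special_k1 (by omega) ha
  · -- s = 1
    rintro rfl
    have hk3 : 3 ≤ k := by omega
    have hQn : (k - 2) * (a - 1) < n := by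
      have h3 : (k - 2) * (a - 1) < k * (a - 1) :=
        (Nat.mul_lt_mul_right (by omega)).mpr (by omega)
      omega
    have hWub : ∀ q, q ≤ k - 2 →
        (fun q => if q = k - 2 then a - 1 else a - 2) q ≤ a - 1 := by
      intro q _; beta_reduce; split_ifs <;> omega
    have hfwd : ∀ q1, q1 < k - 2 →
        (fun q => if q = k - 2 then a - 1 else a - 2) q1 < a - 1 := by
      intro q hq; beta_reduce; rw [if_neg (by omega)]; omega
    have hbwd : ∀ q1 q2, q2 < q1 → q1 ≤ k - 2 →
        ((fun q => if q = k - 2 then a - 1 else a - 2) q1 < a - 1 + 1 ∧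
          1 + 1 ≤ k - (q1 - q2)) ∨
          (1 ≤ 1 ∧ (fun q => if q = k - 2 then a - 1 else a - 2) q1 < 1) := by
      intro q1 q2 h hq1; left
      constructor
      · beta_reduce; split_ifs <;> omega
      · omega
    have hc := Aux.construction (s := 1) (Q := k - 2)
      (W := fun q => if q = k - 2 then a - 1 else a - 2)
      hn ha (by omega) (by omega) (by omega) hQn hWub hfwd hbwd
    obtain ⟨hind, hcost⟩ := hc
    beta_reduce at hcost
    have hn0 : 0 < n := by
      have h1 : 1 * 1 ≤ k * (a - 1) := Nat.mul_le_mul (by omega) (by omega)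
      omega
    haveI : NeZero n := ⟨hn0.ne'⟩
    have hbb := Aux.betaB_ge _ hind
    have hsum : ∑ q ∈ Finset.range (k - 2 + 1), (if q = k - 2 then a - 1 else a - 2)
        = (k - 2) * (a - 2) + (a - 1) := by
      rw [Finset.sum_range_succ, if_pos rfl]
      congr 1
      rw [Finset.sum_congr rfl (fun q hq => if_neg (by
        have := Finset.mem_range.mp hq; omega))]
      rw [Finset.sum_const, Finset.card_range, smul_eq_mul]
    have hexp : (k - 1) * (a - 2) = (k - 2) * (a - 2) + (a - 2) := by
      have h2 : k - 1 = (k - 2) + 1 := by omega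
      rw [h2, Nat.succ_mul]
    omega
  · -- s ≥ 2
    intro hs2
    have hsa : s + 2 ≤ a := by omega
    have hsk : s + 2 ≤ k := by omega
    have hWub : ∀ q, q ≤ k →
        (fun q => if q ≤ k - s - 1 then a - 2 else s - 1) q ≤ a - 1 := by
      intro q _; beta_reduce; split_ifs <;> omega
    have hfwd : ∀ q1, q1 < k →
        (fun q => if q ≤ k - s - 1 then a - 2 else s - 1) q1 < a - 1 := by
      intro q hq; beta_reduce; split_ifs <;> omega
    have hbwd : ∀ q1 q2, q2 < q1 → q1 ≤ k →
        ((fun q => if q ≤ k - s - 1 then a - 2 else s - 1) q1 < a - 1 + s ∧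
          s + 1 ≤ k - (q1 - q2)) ∨
          (1 ≤ s ∧ (fun q => if q ≤ k - s - 1 then a - 2 else s - 1) q1 < s) := by
      intro q1 q2 h hq1
      by_cases hqc : q1 ≤ k - s - 1
      · refine Or.inl ⟨?_, by omega⟩
        beta_reduce; rw [if_pos hqc]; omega
      · refine Or.inr ⟨by omega, ?_⟩
        beta_reduce; rw [if_neg hqc]; omega
    have hc := Aux.construction (Q := k)
      (W := fun q => if q ≤ k - s - 1 then a - 2 else s - 1)
      hn ha hsa hsk le_rfl (by omega) hWub hfwd hbwd
    obtain ⟨hind, hcost⟩ := hc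
    beta_reduce at hcost
    have hn0 : 0 < n := by
      have h1 : 1 * 1 ≤ k * (a - 1) := Nat.mul_le_mul (by omega) (by omega)
      omega
    haveI : NeZero n := ⟨hn0.ne'⟩
    have hbb := Aux.betaB_ge _ hind
    have hsum : ∑ q ∈ Finset.range (k + 1), (if q ≤ k - s - 1 then a - 2 else s - 1)
        = (k - s) * (a - 2) + (s + 1) * (s - 1) := by
      rw [Finset.range_eq_Ico,
        ← Finset.sum_Ico_consecutive _ (Nat.zero_le (k - s)) (by omega : k - s ≤ k + 1)]
      congr 1
      · rw [Finset.sum_congr rfl (fun q hq => if_pos (by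
          have := Finset.mem_Ico.mp hq; omega))]
        rw [Finset.sum_const, Nat.card_Ico, smul_eq_mul, Nat.sub_zero]
      · rw [Finset.sum_congr rfl (fun q hq => if_neg (by
          have := Finset.mem_Ico.mp hq; omega))]
        rw [Finset.sum_const, Nat.card_Ico, smul_eq_mul]
        congr 1
        omega
    have hcomm : (s - 1) * (s + 1) = (s + 1) * (s - 1) := Nat.mul_comm _ _
    omega
end

section
/- Let n = qa + r with r ∈ {0, a-1} and 3 ≤ q < a-1, and let f be an independent broadcast on C⃗(n;1,a) with f(v) ≤ q for all v. Let V¹ = {v : f(v) = q}, V² = {v : 1 ≤ f(v) ≤ q-1}, and V⁺ = V¹ ∪ V². Then Σ_v f(v) ≤ n - |V²| - q|V¹| when r = 0, and Σ_v f(v) ≤ n - |V⁺| - q|V¹| when r = a-1. -/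
lemma sum_range_zmod (n : ℕ) [NeZero n] (g : ZMod n → ℕ) :
    ∑ i ∈ Finset.range n, g (i : ZMod n) = ∑ v : ZMod n, g v := by
  apply Finset.sum_nbij' (i := fun i : ℕ => (i : ZMod n)) (j := fun v : ZMod n => v.val)
  · intro a ha; exact Finset.mem_univ _
  · intro v _; exact Finset.mem_range.2 (ZMod.val_lt v)
  · intro i hi; exact ZMod.val_cast_of_lt (Finset.mem_range.1 hi)
  · intro v _; exact ZMod.natCast_rightInverse v
  · intro i _; rfl

lemma card_filter_zmod (n : ℕ) [NeZero n] (p : ZMod n → Prop) [DecidablePred p] :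
    ((Finset.range n).filter (fun i : ℕ => p (i : ZMod n))).card
      = (Finset.univ.filter p).card := by
  rw [Finset.card_filter, Finset.card_filter]
  exact sum_range_zmod n (fun v => if p v then 1 else 0)

lemma circWalk (n : ℕ) (a : ℤ) (u : ZMod n) (x y : ℕ) :
    circDist n a u (u + (x : ZMod n) * (a : ZMod n) + (y : ZMod n)) ≤ x + y := by
  apply Nat.sInf_le
  refine ⟨fun i => u + ((min i x : ℕ) : ZMod n) * (a : ZMod n) + ((i - x : ℕ) : ZMod n), ?_, ?_, ?_⟩
  · simp
  · have h1 : min (x + y) x = x := by omega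
    have h2 : x + y - x = y := by omega
    dsimp only
    rw [h1, h2]
  · intro i hi
    by_cases h : i < x
    · right
      have h1 : min i x = i := by omega
      have h2 : min (i+1) x = i + 1 := by omega
      have h3 : i - x = 0 := by omega
      have h4 : i + 1 - x = 0 := by omega
      dsimp only
      rw [h1, h2, h3, h4]
      push_cast
      ring
    · left
      have h1 : min i x = x := by omega
      have h2 : min (i+1) x = x := by omega
      have h3 : i + 1 - x = (i - x) + 1 := by omega
      dsimp only
      rw [h1, h2, h3]
      push_cast
      ring

lemma key (n : ℕ) (a : ℤ) (f : ZMod n → ℕ)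
    (hf : ∀ u v : ZMod n, u ≠ v → 0 < f u → 0 < f v → f u < circDist n a u v)
    (u v : ZMod n) (huv : u ≠ v) (hu : 0 < f u) (hv : 0 < f v)
    (x y : ℕ) (hxy : x + y ≤ f u)
    (heq : v = u + (x : ZMod n) * (a : ZMod n) + (y : ZMod n)) : False := by
  have h1 := hf u v huv hu hv
  have h2 := circWalk n a u x y
  rw [← heq] at h2
  omega

lemma shift_eq (n : ℕ) (a : ℕ) (u v : ZMod n) (t t' x y k : ℕ)
    (h : u + (t : ZMod n) = v + (t' : ZMod n))
    (hid : (t : ℤ) + k * n = t' + x * a + y) :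
    v = u + (x : ZMod n) * ((a : ℤ) : ZMod n) + (y : ZMod n) := by
  have h2 := congrArg (fun z : ℤ => (z : ZMod n)) hid
  push_cast at h2
  rw [ZMod.natCast_self] at h2
  ring_nf at h2
  push_cast
  linear_combination h2 - h

lemma main_count (n a q r : ℕ) [NeZero n] (hn : n = q * a + r) (hr : r = 0 ∨ r = a - 1)
    (hq : 3 ≤ q) (ha : q + 2 ≤ a)
    (f : ZMod n → ℕ)
    (hf : ∀ u v : ZMod n, u ≠ v → 0 < f u → 0 < f v → f u < circDist n (a : ℤ) u v)
    (hbd : ∀ v, f v ≤ q) :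
    (∑ v : ZMod n, f v) + (Finset.univ.filter (fun v => 0 < f v)).card
      + (if r = 0 then q - 1 else q) * (Finset.univ.filter (fun v => f v = q)).card ≤ n := by
  classical
  obtain ⟨b, hb⟩ : ∃ b, a = b + 1 := ⟨a - 1, by omega⟩
  have hb4 : 4 ≤ b := by omega
  have habz : (a : ℤ) = (b : ℤ) + 1 := by exact_mod_cast congrArg (Nat.cast (R := ℤ)) hb
  have hrcase : r = 0 ∨ r = b := by rcases hr with h | h <;> omega
  set X : ℕ := if r = 0 then q - 1 else q with hXdef
  have hXcase : (r = 0 ∧ X = q - 1) ∨ (r = b ∧ X = q) := by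
    rcases hrcase with h | h
    · exact Or.inl ⟨h, by rw [hXdef, if_pos h]⟩
    · exact Or.inr ⟨h, by rw [hXdef, if_neg (by omega)]⟩
  clear_value X
  have hXq : X ≤ q := by rcases hXcase with ⟨-, h⟩ | ⟨-, h⟩ <;> omega
  have hqn : q < n := by
    have h2 : q * 5 ≤ q * a := Nat.mul_le_mul (le_refl q) (by omega)
    have h1 := hn
    linarith
  -- the offset sets
  set T : ZMod n → Finset ℕ := fun v =>
    if f v = q then Finset.range (q+1) ∪ (Finset.Icc 1 X).image (fun x => x * b + q)
    else Finset.range (f v + 1) with hTdef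
  have hmem : ∀ v t, t ∈ T v ↔
      (t ≤ f v ∨ (f v = q ∧ ∃ x, (1 ≤ x ∧ x ≤ X) ∧ t = x * b + q)) := by
    intro v t
    simp only [hTdef]
    by_cases h : f v = q
    · rw [if_pos h]
      simp only [Finset.mem_union, Finset.mem_range, Finset.mem_image,
        Finset.mem_Icc, Nat.lt_succ_iff]
      constructor
      · rintro (h1 | ⟨x, ⟨hx1, hx2⟩, rfl⟩)
        · exact Or.inl (h ▸ h1)
        · exact Or.inr ⟨h, x, ⟨hx1, hx2⟩, rfl⟩
      · rintro (h1 | ⟨-, x, ⟨hx1, hx2⟩, rfl⟩)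
        · exact Or.inl (h ▸ h1)
        · exact Or.inr ⟨x, ⟨hx1, hx2⟩, rfl⟩
    · rw [if_neg h]
      simp only [Finset.mem_range, Nat.lt_succ_iff]
      constructor
      · exact fun h1 => Or.inl h1
      · rintro (h1 | ⟨h1, -⟩)
        · exact h1
        · exact absurd h1 h
  have htlt : ∀ v, ∀ t ∈ T v, t < n := by
    intro v t ht
    rcases (hmem v t).1 ht with h1 | ⟨-, x, ⟨hx1, hx2⟩, rfl⟩
    · have := hbd v; omega
    · have h2 : x * b ≤ X * b := Nat.mul_le_mul_right b hx2
      have h3 : q * a = q * b + q := by rw [hb]; ring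
      rcases hrcase with h4 | h4
      · have hX : X = q - 1 := by rcases hXcase with ⟨-, h⟩ | ⟨h5, -⟩ <;> omega
        have h5 : X * b + b = q * b := by rw [hX]; cases q with
          | zero => omega
          | succ q' => simp [Nat.succ_sub_one]; ring
        omega
      · have hX : X = q := by rcases hXcase with ⟨h5, -⟩ | ⟨-, h5⟩ <;> omega
        have h5 : X * b = q * b := by rw [hX]
        omega
  -- the charged vertex sets
  set S : ZMod n → Finset (ZMod n) := fun v => (T v).image (fun t : ℕ => v + (t : ZMod n)) with hSdef
  -- cardinality of S v
  have hScard : ∀ v, (S v).card = (T v).card := by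
    intro v
    apply Finset.card_image_of_injOn
    intro t ht t' ht' he
    have h1 : (t : ZMod n) = (t' : ZMod n) := by
      have := add_left_cancel he
      exact this
    have h2 := congrArg ZMod.val h1
    rwa [ZMod.val_cast_of_lt (htlt v t ht), ZMod.val_cast_of_lt (htlt v t' ht')] at h2
  have hTcard : ∀ v, (T v).card = f v + 1 + (if f v = q then X else 0) := by
    intro v
    by_cases h : f v = q
    · have e1 : T v = Finset.range (q+1) ∪ (Finset.Icc 1 X).image (fun x => x * b + q) := by
        simp only [hTdef]; rw [if_pos h]
      rw [e1, Finset.card_union_of_disjoint, Finset.card_range,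
        Finset.card_image_of_injOn, Nat.card_Icc]
      · rw [h, if_pos rfl]; omega
      · intro x hx x' hx' hxx
        dsimp only at hxx
        have : x * b = x' * b := by omega
        exact Nat.eq_of_mul_eq_mul_right (by omega) this
      · rw [Finset.disjoint_left]
        intro t ht ht'
        rw [Finset.mem_range] at ht
        obtain ⟨x, hx, rfl⟩ := Finset.mem_image.1 ht'
        rw [Finset.mem_Icc] at hx
        have : b ≤ x * b := Nat.le_mul_of_pos_left b (by omega)
        omega
    · have e1 : T v = Finset.range (f v + 1) := by simp only [hTdef]; rw [if_neg h]
      rw [e1, Finset.card_range, if_neg h]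
  -- no collisions: base-base
  have bb : ∀ u v : ZMod n, u ≠ v → 0 < f u → 0 < f v → ∀ s s' : ℕ, s ≤ f u → s' ≤ f v →
      u + (s : ZMod n) = v + (s' : ZMod n) → False := by
    intro u v huv hu hv s s' hs hs' h
    rcases lt_trichotomy s s' with hlt | heq | hgt
    · refine key n (a : ℤ) f hf v u huv.symm hv hu 0 (s' - s) (by omega) ?_
      refine shift_eq n a v u s' s 0 (s' - s) 0 h.symm ?_
      have h1 : ((s' - s : ℕ) : ℤ) = (s' : ℤ) - s := by omega
      push_cast [h1]
      ring
    · subst heq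
      exact huv (add_right_cancel h)
    · refine key n (a : ℤ) f hf u v huv hu hv 0 (s - s') (by omega) ?_
      refine shift_eq n a u v s s' 0 (s - s') 0 h ?_
      have h1 : ((s - s' : ℕ) : ℤ) = (s : ℤ) - s' := by omega
      push_cast [h1]
      ring
  -- no collisions: tip-base
  have tb : ∀ u v : ZMod n, u ≠ v → 0 < f u → 0 < f v → f u = q → ∀ x₀ s : ℕ,
      1 ≤ x₀ → x₀ ≤ X → s ≤ f v →
      u + ((x₀ * b + q : ℕ) : ZMod n) = v + (s : ZMod n) → False := by
    intro u v huv hu hv hfu x₀ s hx1 hxX hs h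
    by_cases hc : s + x₀ ≤ q
    · refine key n (a : ℤ) f hf u v huv hu hv x₀ (q - s - x₀) (by omega) ?_
      refine shift_eq n a u v (x₀ * b + q) s x₀ (q - s - x₀) 0 h ?_
      have h1 : ((q - s - x₀ : ℕ) : ℤ) = (q : ℤ) - s - x₀ := by omega
      push_cast [h1]
      linear_combination (-(x₀ : ℤ)) * habz
    · rcases hXcase with ⟨hr0, hX0⟩ | ⟨hrb, hXb⟩
      · refine key n (a : ℤ) f hf v u huv.symm hv hu (q - x₀) (x₀ + s - q) (by omega) ?_
        refine shift_eq n a v u s (x₀ * b + q) (q - x₀) (x₀ + s - q) 1 h.symm ?_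
        have h1 : ((q - x₀ : ℕ) : ℤ) = (q : ℤ) - x₀ := by omega
        have h2 : ((x₀ + s - q : ℕ) : ℤ) = (x₀ : ℤ) + s - q := by omega
        have h3 : (n : ℤ) = (q : ℤ) * a := by rw [hn, hr0]; push_cast; ring
        push_cast [h1, h2, h3]
        linear_combination (x₀ : ℤ) * habz
      · refine key n (a : ℤ) f hf v u huv.symm hv hu (q - x₀ + 1) (x₀ + s - q - 1) (by omega) ?_
        refine shift_eq n a v u s (x₀ * b + q) (q - x₀ + 1) (x₀ + s - q - 1) 1 h.symm ?_
        have h1 : ((q - x₀ + 1 : ℕ) : ℤ) = (q : ℤ) - x₀ + 1 := by omega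
        have h2 : ((x₀ + s - q - 1 : ℕ) : ℤ) = (x₀ : ℤ) + s - q - 1 := by omega
        have h3 : (n : ℤ) = (q : ℤ) * a + b := by rw [hn, hrb]; push_cast; ring
        push_cast [h1, h2, h3]
        linear_combination ((x₀ : ℤ) - 1) * habz
  -- no collisions: tip-tip
  have tt : ∀ u v : ZMod n, u ≠ v → 0 < f u → 0 < f v → f u = q → f v = q → ∀ x₀ x₁ : ℕ,
      1 ≤ x₀ → x₀ ≤ X → 1 ≤ x₁ → x₁ ≤ X → x₁ < x₀ →
      u + ((x₀ * b + q : ℕ) : ZMod n) = v + ((x₁ * b + q : ℕ) : ZMod n) → False := by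
    intro u v huv hu hv hfu hfv x₀ x₁ hx01 hx0X hx11 hx1X hlt h
    rcases hXcase with ⟨hr0, hX0⟩ | ⟨hrb, hXb⟩
    · refine key n (a : ℤ) f hf v u huv.symm hv hu (q - (x₀ - x₁)) (x₀ - x₁) (by omega) ?_
      refine shift_eq n a v u (x₁ * b + q) (x₀ * b + q) (q - (x₀ - x₁)) (x₀ - x₁) 1 h.symm ?_
      have h1 : ((q - (x₀ - x₁) : ℕ) : ℤ) = (q : ℤ) - (x₀ - x₁) := by omega
      have h2 : ((x₀ - x₁ : ℕ) : ℤ) = (x₀ : ℤ) - x₁ := by omega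
      have h3 : (n : ℤ) = (q : ℤ) * a := by rw [hn, hr0]; push_cast; ring
      push_cast [h1, h2, h3]
      linear_combination ((x₀ : ℤ) - x₁) * habz
    · refine key n (a : ℤ) f hf v u huv.symm hv hu (q - (x₀ - x₁) + 1) (x₀ - x₁ - 1) (by omega) ?_
      refine shift_eq n a v u (x₁ * b + q) (x₀ * b + q) (q - (x₀ - x₁) + 1) (x₀ - x₁ - 1) 1 h.symm ?_
      have h1 : ((q - (x₀ - x₁) + 1 : ℕ) : ℤ) = (q : ℤ) - (x₀ - x₁) + 1 := by omega
      have h2 : ((x₀ - x₁ - 1 : ℕ) : ℤ) = (x₀ : ℤ) - x₁ - 1 := by omega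
      have h3 : (n : ℤ) = (q : ℤ) * a + b := by rw [hn, hrb]; push_cast; ring
      push_cast [h1, h2, h3]
      linear_combination ((x₀ : ℤ) - x₁ - 1) * habz
  -- dispatcher
  have hnc : ∀ u v : ZMod n, u ≠ v → 0 < f u → 0 < f v → ∀ t ∈ T u, ∀ t' ∈ T v,
      u + (t : ZMod n) ≠ v + (t' : ZMod n) := by
    intro u v huv hu hv t ht t' ht' h
    rcases (hmem u t).1 ht with hsU | ⟨hfu, x₀, ⟨hx01, hx0X⟩, rfl⟩ <;>
      rcases (hmem v t').1 ht' with hsV | ⟨hfv, x₁, ⟨hx11, hx1X⟩, rfl⟩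
    · exact bb u v huv hu hv t t' hsU hsV h
    · exact tb v u huv.symm hv hu hfv x₁ t hx11 hx1X hsU h.symm
    · exact tb u v huv hu hv hfu x₀ t' hx01 hx0X hsV h
    · rcases lt_trichotomy x₀ x₁ with hlt | heq | hgt
      · exact tt v u huv.symm hv hu hfv hfu x₁ x₀ hx11 hx1X hx01 hx0X hlt h.symm
      · subst heq
        exact huv (add_right_cancel h)
      · exact tt u v huv hu hv hfu hfv x₀ x₁ hx01 hx0X hx11 hx1X hgt h
  -- disjointness and the count
  set P : Finset (ZMod n) := Finset.univ.filter (fun v => 0 < f v) with hPdef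
  have hdisj : ∀ u ∈ P, ∀ v ∈ P, u ≠ v → Disjoint (S u) (S v) := by
    intro u hu v hv huv
    rw [Finset.disjoint_left]
    intro w hwu hwv
    obtain ⟨t, ht, rfl⟩ := Finset.mem_image.1 hwu
    obtain ⟨t', ht', he⟩ := Finset.mem_image.1 hwv
    exact hnc u v huv (Finset.mem_filter.1 hu).2 (Finset.mem_filter.1 hv).2 t ht t' ht' he.symm
  have hbig : ∑ v ∈ P, (S v).card ≤ n := by
    rw [← Finset.card_biUnion hdisj]
    calc (P.biUnion S).card ≤ Finset.univ.card := Finset.card_le_card (Finset.subset_univ _)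
      _ = n := by rw [Finset.card_univ, ZMod.card]
  have hsum1 : ∑ v ∈ P, (S v).card
      = ∑ v ∈ P, (f v + 1 + (if f v = q then X else 0)) := by
    apply Finset.sum_congr rfl
    intro v _
    rw [hScard, hTcard]
  have hsum2 : ∑ v ∈ P, (f v + 1 + (if f v = q then X else 0))
      = (∑ v ∈ P, f v) + P.card + X * (Finset.univ.filter (fun v => f v = q)).card := by
    rw [Finset.sum_add_distrib, Finset.sum_add_distrib, Finset.sum_const, smul_eq_mul, mul_one]
    congr 1
    rw [← Finset.sum_filter]
    have e : P.filter (fun v => f v = q) = Finset.univ.filter (fun v => f v = q) := by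
      ext w
      simp only [hPdef, Finset.mem_filter, Finset.mem_univ, true_and, Finset.filter_filter]
      constructor
      · rintro ⟨-, h⟩; exact h
      · intro h; exact ⟨by omega, h⟩
    rw [e, Finset.sum_const, smul_eq_mul, mul_comm]
  have hsum3 : ∑ v ∈ P, f v = ∑ v : ZMod n, f v := by
    apply Finset.sum_filter_of_ne
    intro v _ hv
    exact Nat.pos_of_ne_zero hv
  rw [hsum1, hsum2, hsum3] at hbig
  omega
theorem stmt14 (n a q r : ℕ) (hn : n = q * a + r) (hr : r = 0 ∨ r = a - 1)
    (hq : 3 ≤ q) (hqa : q < a - 1)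
    (f : ZMod n → ℕ) (hf : IsIndepBroadcast n (a : ℤ) f)
    (hbd : ∀ v, f v ≤ q) :
    (r = 0 →
      (circCost n f : ℤ) ≤
        (n : ℤ) -
          ((Finset.range n).filter (fun i : ℕ => 1 ≤ f (i : ZMod n) ∧ f (i : ZMod n) ≤ q - 1)).card -
          (q : ℤ) * ((Finset.range n).filter (fun i : ℕ => f (i : ZMod n) = q)).card) ∧
    (r = a - 1 →
      (circCost n f : ℤ) ≤
        (n : ℤ) -
          ((Finset.range n).filter (fun i : ℕ => 0 < f (i : ZMod n))).card -
          (q : ℤ) * ((Finset.range n).filter (fun i : ℕ => f (i : ZMod n) = q)).card) := by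
  classical
  have ha : q + 2 ≤ a := by omega
  have ha5 : 5 ≤ a := by omega
  have hn0 : 0 < n := by
    have h2 : 3 * 5 ≤ q * a := Nat.mul_le_mul hq ha5
    have h3 := hn
    linarith
  haveI : NeZero n := ⟨hn0.ne'⟩
  have hmain := main_count n a q r hn hr hq ha f hf.2 hbd
  have hcost : circCost n f = ∑ v : ZMod n, f v := by
    unfold circCost
    exact sum_range_zmod n f
  have hc1 : ((Finset.range n).filter (fun i : ℕ => f (i : ZMod n) = q)).card
      = (Finset.univ.filter (fun v : ZMod n => f v = q)).card :=
    card_filter_zmod n (fun v => f v = q)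
  have hc2 : ((Finset.range n).filter
        (fun i : ℕ => 1 ≤ f (i : ZMod n) ∧ f (i : ZMod n) ≤ q - 1)).card
      = (Finset.univ.filter (fun v : ZMod n => 1 ≤ f v ∧ f v ≤ q - 1)).card :=
    card_filter_zmod n (fun v => 1 ≤ f v ∧ f v ≤ q - 1)
  have hc3 : ((Finset.range n).filter (fun i : ℕ => 0 < f (i : ZMod n))).card
      = (Finset.univ.filter (fun v : ZMod n => 0 < f v)).card :=
    card_filter_zmod n (fun v => 0 < f v)
  have hsplit : (Finset.univ.filter (fun v : ZMod n => 0 < f v)).card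
      = (Finset.univ.filter (fun v : ZMod n => 1 ≤ f v ∧ f v ≤ q - 1)).card
        + (Finset.univ.filter (fun v : ZMod n => f v = q)).card := by
    rw [Finset.card_filter, Finset.card_filter, Finset.card_filter, ← Finset.sum_add_distrib]
    apply Finset.sum_congr rfl
    intro v _
    have hb := hbd v
    split_ifs <;> omega
  constructor
  · intro hr0
    have h := hmain
    rw [if_pos hr0] at h
    rw [hsplit] at h
    set c1 := (Finset.univ.filter (fun v : ZMod n => f v = q)).card with hc1d
    set c2 := (Finset.univ.filter (fun v : ZMod n => 1 ≤ f v ∧ f v ≤ q - 1)).card with hc2d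
    have e : (q - 1) * c1 + c1 = q * c1 := by
      calc (q - 1) * c1 + c1 = ((q - 1) + 1) * c1 := by ring
        _ = q * c1 := by congr 1; omega
    have hN : circCost n f + c2 + q * c1 ≤ n := by
      rw [hcost]
      omega
    rw [hc1, hc2]
    have hZ : (circCost n f : ℤ) + c2 + q * c1 ≤ n := by exact_mod_cast hN
    linarith
  · intro hr1
    have h := hmain
    have hrne : ¬ r = 0 := by omega
    rw [if_neg hrne] at h
    have hN : circCost n f + (Finset.univ.filter (fun v : ZMod n => 0 < f v)).card
        + q * (Finset.univ.filter (fun v : ZMod n => f v = q)).card ≤ n := by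
      rw [hcost]
      omega
    rw [hc1, hc3]
    have hZ : (circCost n f : ℤ)
        + ((Finset.univ.filter (fun v : ZMod n => 0 < f v)).card : ℤ)
        + (q : ℤ) * ((Finset.univ.filter (fun v : ZMod n => f v = q)).card : ℤ) ≤ n := by
      exact_mod_cast hN
    linarith
end
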